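/- arXiv:1411.6360 — 2 statements merged into one kernel-verified Lean document; each statement's English description precedes it below -/
import Mathlib

section
/- Let π be a finitely generated group, φ: π → π an endomorphism, and π' a φ-invariant normal subgroup of π which is finitely generated. Then GR(φ) ≤ max{GR(φ'), GR(φ̂)}, where φ' = φ|_{π'} and φ̂ is the induced endomorphism of π/π'. -/
open Filter Topology

/-- Word length of `g` with respect to the (symmetrized) generating set `S`. -/
noncomputable def wordLength {G : Type*} [Group G] (S : Set G) (g : G) : ℕ :=
  sInf {n : ℕ | ∃ w : List G, w.length = n ∧ (∀ x ∈ w, x ∈ S ∨ x⁻¹ ∈ S) ∧ w.prod = g}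

/-- `L_k(f, S) = max_{s ∈ S} L(f^k(s), S)`. -/
noncomputable def Lk {G : Type*} [Group G] (S : Finset G) (f : G → G) (k : ℕ) : ℕ :=
  S.sup fun s => wordLength (S : Set G) (f^[k] s)

/-- The growth rate `GR(f) = inf_{k ≥ 1} L_k(f,S)^{1/k}` (which equals
`lim_{k→∞} L_k(f,S)^{1/k}`). -/
noncomputable def GR {G : Type*} [Group G] (S : Finset G) (f : G → G) : ℝ :=
  ⨅ k : ℕ+, (Lk S f k : ℝ) ^ (((k : ℕ) : ℝ))⁻¹

/-- `f` is eventually trivial if some iterate is the trivial endomorphism. -/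
def EventuallyTrivial {G : Type*} [Group G] (f : G → G) : Prop :=
  ∃ N : ℕ, 0 < N ∧ ∀ g, f^[N] g = 1

section Words
variable {G : Type*} [Group G] {H : Type*} [Group H]

def HasWord (S : Set G) (g : G) (n : ℕ) : Prop :=
  ∃ w : List G, (∀ x ∈ w, x ∈ S ∨ x⁻¹ ∈ S) ∧ w.prod = g ∧ w.length ≤ n

theorem HasWord.mono {S : Set G} {g : G} {m n : ℕ} (h : HasWord S g m) (hmn : m ≤ n) :
    HasWord S g n := by
  obtain ⟨w, h1, h2, h3⟩ := h; exact ⟨w, h1, h2, h3.trans hmn⟩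

theorem hasWord_one (S : Set G) : HasWord S 1 0 := ⟨[], by simp, by simp, by simp⟩

theorem HasWord.eq_one {S : Set G} {g : G} (h : HasWord S g 0) : g = 1 := by
  obtain ⟨w, _, h2, h3⟩ := h
  rw [Nat.le_zero, List.length_eq_zero_iff] at h3
  simp [h3] at h2; exact h2.symm

theorem hasWord_single {S : Set G} {x : G} (h : x ∈ S ∨ x⁻¹ ∈ S) : HasWord S x 1 :=
  ⟨[x], by simpa using h, by simp, by simp⟩

theorem HasWord.mul {S : Set G} {g h : G} {m n : ℕ} (hg : HasWord S g m) (hh : HasWord S h n) :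
    HasWord S (g * h) (m + n) := by
  obtain ⟨w, h1, h2, h3⟩ := hg
  obtain ⟨v, k1, k2, k3⟩ := hh
  refine ⟨w ++ v, ?_, by simp [h2, k2], by simp; omega⟩
  intro x hx; rcases List.mem_append.1 hx with h | h
  · exact h1 x h
  · exact k1 x h

theorem HasWord.inv {S : Set G} {g : G} {m : ℕ} (hg : HasWord S g m) : HasWord S g⁻¹ m := by
  obtain ⟨w, h1, h2, h3⟩ := hg
  refine ⟨(w.map (·⁻¹)).reverse, ?_, ?_, by simpa using h3⟩
  · intro x hx
    simp only [List.mem_reverse, List.mem_map] at hx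
    obtain ⟨y, hy, rfl⟩ := hx
    rcases h1 y hy with h | h
    · right; simpa using h
    · left; exact h
  · rw [List.prod_reverse_noncomm]
    simp [h2]

theorem wordLength_le {S : Set G} {g : G} {n : ℕ} (h : HasWord S g n) : wordLength S g ≤ n := by
  obtain ⟨w, h1, h2, h3⟩ := h
  exact le_trans (Nat.sInf_le ⟨w, rfl, h1, h2⟩) h3

theorem exists_word (S : Set G) (hS : Subgroup.closure S = ⊤) (g : G) :
    ∃ w : List G, (∀ x ∈ w, x ∈ S ∨ x⁻¹ ∈ S) ∧ w.prod = g := by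
  have hg : g ∈ Subgroup.closure S := by rw [hS]; trivial
  induction hg using Subgroup.closure_induction with
  | mem x hx => exact ⟨[x], by simpa using Or.inl hx, by simp⟩
  | one => exact ⟨[], by simp, by simp⟩
  | mul x y _ _ ihx ihy =>
      obtain ⟨w, h1, h2⟩ := ihx; obtain ⟨v, k1, k2⟩ := ihy
      refine ⟨w ++ v, ?_, by simp [h2, k2]⟩
      intro z hz; rcases List.mem_append.1 hz with h | h
      · exact h1 z h
      · exact k1 z h
  | inv x _ ihx =>
      obtain ⟨w, h1, h2⟩ := ihx
      have := HasWord.inv (S := S) (g := x) (m := w.length) ⟨w, h1, h2, le_rfl⟩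
      obtain ⟨v, k1, k2, _⟩ := this
      exact ⟨v, k1, k2⟩

theorem hasWord_wordLength {S : Set G} (hS : Subgroup.closure S = ⊤) (g : G) :
    HasWord S g (wordLength S g) := by
  have hne : {n : ℕ | ∃ w : List G, w.length = n ∧ (∀ x ∈ w, x ∈ S ∨ x⁻¹ ∈ S) ∧ w.prod = g}.Nonempty := by
    obtain ⟨w, h1, h2⟩ := exists_word S hS g
    exact ⟨w.length, w, rfl, h1, h2⟩
  obtain ⟨w, hw, h1, h2⟩ := Nat.sInf_mem hne
  exact ⟨w, h1, h2, le_of_eq hw⟩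

theorem hasWord_map {S : Set G} {V : Set H} {f : G → H}
    (hone : f 1 = 1) (hmul : ∀ a b, f (a * b) = f a * f b) (hfinv : ∀ a, f a⁻¹ = (f a)⁻¹)
    {M : ℕ} (hgen : ∀ s ∈ S, HasWord V (f s) M)
    {g : G} {n : ℕ} (h : HasWord S g n) : HasWord V (f g) (M * n) := by
  obtain ⟨w, h1, h2, h3⟩ := h
  subst h2
  have main : ∀ w : List G, (∀ x ∈ w, x ∈ S ∨ x⁻¹ ∈ S) →
      HasWord V (f w.prod) (M * w.length) := by
    intro w
    induction w with
    | nil => intro _; simpa [hone] using hasWord_one V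
    | cons x tl ih =>
        intro hw
        have hx : HasWord V (f x) M := by
          rcases hw x (by simp) with h | h
          · exact hgen x h
          · have := (hgen _ h).inv
            rwa [hfinv, inv_inv] at this
        have htl := ih (fun y hy => hw y (by simp [hy]))
        have : HasWord V (f x * f tl.prod) (M + M * tl.length) := hx.mul htl
        rw [List.prod_cons, hmul]
        refine this.mono ?_
        simp [List.length_cons, Nat.mul_succ, Nat.mul_add]; omega
  exact (main w h1).mono (Nat.mul_le_mul_left M h3)

end Words

section LkGR
variable {G : Type*} [Group G]

theorem hasWord_Lk {S : Finset G} (hS : Subgroup.closure (S : Set G) = ⊤) (f : G → G) (k : ℕ)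
    {s : G} (hs : s ∈ S) : HasWord (S : Set G) (f^[k] s) (Lk S f k) :=
  (hasWord_wordLength hS _).mono (Finset.le_sup (f := fun s => wordLength (S : Set G) (f^[k] s)) hs)

theorem Lk_le {S : Finset G} {f : G → G} {k n : ℕ}
    (h : ∀ s ∈ S, HasWord (S : Set G) (f^[k] s) n) : Lk S f k ≤ n :=
  Finset.sup_le fun s hs => wordLength_le (h s hs)

theorem Lk_add_le (S : Finset G) (hS : Subgroup.closure (S : Set G) = ⊤) (f : G →* G)
    (k l : ℕ) : Lk S ⇑f (k + l) ≤ Lk S ⇑f k * Lk S ⇑f l := by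
  refine Lk_le fun s hs => ?_
  have h1 : HasWord (S : Set G) ((⇑f)^[l] s) (Lk S ⇑f l) := hasWord_Lk hS ⇑f l hs
  have h2 : HasWord (S : Set G) ((⇑f)^[k] ((⇑f)^[l] s)) (Lk S ⇑f k * Lk S ⇑f l) := by
    refine hasWord_map (iterate_map_one f k) (iterate_map_mul f k) (iterate_map_inv f k)
      (fun t ht => hasWord_Lk hS ⇑f k ht) h1
  rwa [← Function.iterate_add_apply] at h2

theorem Lk_zero_le (S : Finset G) (f : G → G) : Lk S f 0 ≤ 1 :=
  Lk_le fun s hs => by simpa using hasWord_single (Or.inl (by exact_mod_cast hs))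

theorem Lk_mul_le (S : Finset G) (hS : Subgroup.closure (S : Set G) = ⊤) (f : G →* G)
    (m j : ℕ) : Lk S ⇑f (m * j) ≤ (Lk S ⇑f m) ^ j := by
  induction j with
  | zero => simpa using Lk_zero_le S ⇑f
  | succ j ih =>
      have : Lk S ⇑f (m * j + m) ≤ Lk S ⇑f (m * j) * Lk S ⇑f m := Lk_add_le S hS f _ _
      calc Lk S ⇑f (m * (j + 1)) = Lk S ⇑f (m * j + m) := by ring_nf
        _ ≤ Lk S ⇑f (m * j) * Lk S ⇑f m := this
        _ ≤ (Lk S ⇑f m) ^ j * Lk S ⇑f m := Nat.mul_le_mul_right _ ih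
        _ = (Lk S ⇑f m) ^ (j + 1) := by ring

theorem GR_nonneg (S : Finset G) (f : G → G) : 0 ≤ GR S f :=
  le_ciInf fun k => Real.rpow_nonneg (Nat.cast_nonneg _) _

theorem GR_le_term (S : Finset G) (f : G → G) (k : ℕ+) :
    GR S f ≤ (Lk S f k : ℝ) ^ (((k : ℕ) : ℝ))⁻¹ :=
  ciInf_le ⟨0, by rintro x ⟨k, rfl⟩; exact Real.rpow_nonneg (Nat.cast_nonneg _) _⟩ k

theorem exists_term_lt {S : Finset G} {f : G → G} {c : ℝ} (h : GR S f < c) :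
    ∃ k : ℕ+, (Lk S f k : ℝ) ^ (((k : ℕ) : ℝ))⁻¹ < c :=
  exists_lt_of_ciInf_lt h

end LkGR

section QuotSub
variable {π : Type*} [Group π] {N : Subgroup π} [N.Normal]

theorem mk_out_eq (q : π ⧸ N) : ((q.out : π) : π ⧸ N) = q := by
  exact QuotientGroup.out_eq' q

theorem mk_iterate (φ : π →* π) (h : N ≤ N.comap φ) (k : ℕ) (g : π) :
    ((((⇑φ)^[k] g) : π) : π ⧸ N) = (⇑(QuotientGroup.map N N φ h))^[k] ((g : π) : π ⧸ N) := by
  induction k with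
  | zero => rfl
  | succ k ih =>
      rw [Function.iterate_succ_apply', Function.iterate_succ_apply', ← ih,
        QuotientGroup.map_mk]

end QuotSub

section Analytic
open Asymptotics

theorem tendsto_aux (c m : ℕ) (hc : 1 ≤ c) (hm : 1 ≤ m) :
    Tendsto (fun j : ℕ => ((c * (1 + j) : ℕ) : ℝ) ^ (((m * j : ℕ) : ℝ))⁻¹) atTop (𝓝 1) := by
  have hlog : Tendsto (fun x : ℝ => Real.log (c * (1 + x)) * ((m : ℝ) * x)⁻¹) atTop (𝓝 0) := by
    have h1 : Tendsto (fun x : ℝ => (c : ℝ) * (1 + x)) atTop atTop := by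
      apply Tendsto.const_mul_atTop (by positivity : (0:ℝ) < c)
      exact tendsto_atTop_add_const_left _ _ tendsto_id
    have h2 : (fun x : ℝ => Real.log ((c : ℝ) * (1 + x))) =o[atTop]
        (fun x : ℝ => (c : ℝ) * (1 + x)) := by
      simpa [Function.comp_def] using Real.isLittleO_log_id_atTop.comp_tendsto h1
    have h3 : (fun x : ℝ => (c : ℝ) * (1 + x)) =O[atTop] (fun x : ℝ => (m : ℝ) * x) := by
      rw [isBigO_iff]
      refine ⟨2 * c / m, Filter.eventually_atTop.2 ⟨1, fun x hx => ?_⟩⟩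
      have hm0 : (0:ℝ) < m := by positivity
      have hc0 : (0:ℝ) < c := by positivity
      simp only [Real.norm_eq_abs]
      rw [abs_of_nonneg (by nlinarith), abs_of_nonneg (by nlinarith)]
      rw [div_mul_eq_mul_div, le_div_iff₀ hm0]
      have key : (c:ℝ) * m * 1 ≤ (c:ℝ) * m * x :=
        mul_le_mul_of_nonneg_left hx (by positivity)
      nlinarith [key]
    have h4 := (h2.trans_isBigO h3).tendsto_div_nhds_zero
    simpa [div_eq_mul_inv] using h4
  have hnat : Tendsto (fun j : ℕ => Real.log (c * (1 + (j:ℝ))) * ((m : ℝ) * j)⁻¹) atTop (𝓝 0) :=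
    hlog.comp tendsto_natCast_atTop_atTop
  have hexp : Tendsto (fun j : ℕ =>
      Real.exp (Real.log (c * (1 + (j:ℝ))) * ((m : ℝ) * j)⁻¹)) atTop (𝓝 1) := by
    have := (Real.continuous_exp.tendsto 0).comp hnat
    simpa [Function.comp_def] using this
  refine hexp.congr fun j => ?_
  have hpos : (0:ℝ) < (c : ℝ) * (1 + j) := by positivity
  rw [← Real.rpow_def_of_pos hpos]
  push_cast
  norm_num

end Analytic

section Lift
variable {π : Type*} [Group π] {N : Subgroup π} [N.Normal]

theorem lift_word (T : Finset (π ⧸ N)) :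
    ∀ wq : List (π ⧸ N), (∀ y ∈ wq, y ∈ (T : Set (π ⧸ N)) ∨ y⁻¹ ∈ (T : Set (π ⧸ N))) →
    ∃ w : List π, (∀ x ∈ w, x ∈ (fun q : π ⧸ N => q.out) '' (T : Set (π ⧸ N)) ∨
        x⁻¹ ∈ (fun q : π ⧸ N => q.out) '' (T : Set (π ⧸ N))) ∧
      w.length = wq.length ∧ ((w.prod : π) : π ⧸ N) = wq.prod := by
  intro wq
  induction wq with
  | nil => exact fun _ => ⟨[], by simp, by simp, by simp⟩
  | cons y tl ih =>
    intro h
    obtain ⟨w, hw1, hw2, hw3⟩ := ih (fun z hz => h z (by simp [hz]))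
    rcases h y (by simp) with hy | hy
    · refine ⟨y.out :: w, ?_, by simp [hw2], ?_⟩
      · intro x hx; rcases List.mem_cons.1 hx with rfl | hx
        · exact Or.inl ⟨y, hy, rfl⟩
        · exact hw1 x hx
      · simp only [List.prod_cons, QuotientGroup.mk_mul]
        rw [hw3, mk_out_eq]
    · refine ⟨(y⁻¹).out⁻¹ :: w, ?_, by simp [hw2], ?_⟩
      · intro x hx; rcases List.mem_cons.1 hx with rfl | hx
        · right; rw [inv_inv]; exact ⟨y⁻¹, hy, rfl⟩
        · exact hw1 x hx
      · simp only [List.prod_cons, QuotientGroup.mk_mul, QuotientGroup.mk_inv]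
        rw [hw3, mk_out_eq, inv_inv]

theorem decomp (T : Finset (π ⧸ N)) (hT : Subgroup.closure (T : Set (π ⧸ N)) = ⊤) (g : π) :
    ∃ (w : List π) (ν : N),
      (∀ x ∈ w, x ∈ (fun q : π ⧸ N => q.out) '' (T : Set (π ⧸ N)) ∨
        x⁻¹ ∈ (fun q : π ⧸ N => q.out) '' (T : Set (π ⧸ N))) ∧
      w.length ≤ wordLength (T : Set (π ⧸ N)) ((g : π) : π ⧸ N) ∧ g = w.prod * (ν : π) := by
  obtain ⟨wq, h1, h2, h3⟩ := hasWord_wordLength hT (((g : π) : π ⧸ N))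
  obtain ⟨w, k1, k2, k3⟩ := lift_word T wq h1
  have hmem : w.prod⁻¹ * g ∈ N := by
    rw [← QuotientGroup.eq_one_iff]
    rw [QuotientGroup.mk_mul, QuotientGroup.mk_inv, k3, h2]
    simp
  refine ⟨w, ⟨w.prod⁻¹ * g, hmem⟩, k1, ?_, by group⟩
  rw [k2]; exact h3

end Lift

set_option maxHeartbeats 1600000 in
/-- If `π'` is a `φ`-invariant, finitely generated normal subgroup of the
finitely generated group `π`, then `GR(φ) ≤ max{GR(φ'), GR(φ̂)}`, where `φ'` is the
restriction of `φ` to `π'` and `φ̂` is the induced endomorphism of `π/π'`. -/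
theorem GR_le_max_restriction_quotient {π : Type*} [Group π] (S : Finset π)
    (hS : Subgroup.closure (S : Set π) = ⊤) (φ : π →* π)
    (N : Subgroup π) [N.Normal] (hinv : ∀ g ∈ N, φ g ∈ N)
    (S' : Finset N) (hS' : Subgroup.closure (S' : Set N) = ⊤)
    (T : Finset (π ⧸ N)) (hT : Subgroup.closure (T : Set (π ⧸ N)) = ⊤) :
    GR S ⇑φ ≤ max (GR S' (fun x : N => (⟨φ x, hinv x x.2⟩ : N)))
      (GR T ⇑(QuotientGroup.map N N φ (fun g hg => hinv g hg))) := by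
  classical
  set φN : N →* N :=
    { toFun := fun x : N => (⟨φ x, hinv x x.2⟩ : N)
      map_one' := by ext; simp
      map_mul' := fun a b => by ext; simp } with hφN
  set φQ : (π ⧸ N) →* (π ⧸ N) := QuotientGroup.map N N φ (fun g hg => hinv g hg) with hφQ
  show GR S ⇑φ ≤ max (GR S' ⇑φN) (GR T ⇑φQ)
  set R : ℝ := max (GR S' ⇑φN) (GR T ⇑φQ) with hR
  have hR0 : (0:ℝ) ≤ R := le_max_of_le_left (GR_nonneg _ _)
  -- coercion of iterates of φN
  have hcoeiter : ∀ (k : ℕ) (x : N), (((⇑φN)^[k] x : N) : π) = (⇑φ)^[k] (x : π) := by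
    intro k
    induction k with
    | zero => intro x; rfl
    | succ k ih =>
        intro x
        rw [Function.iterate_succ_apply', Function.iterate_succ_apply', ← ih]
        rfl
  -- iterates of φ through the quotient
  have hmkiter : ∀ (k : ℕ) (g : π),
      ((((⇑φ)^[k] g) : π) : π ⧸ N) = (⇑φQ)^[k] ((g : π) : π ⧸ N) :=
    fun k g => mk_iterate φ (fun g hg => hinv g hg) k g
  -- the lifted alphabet and decomposition data
  set OT : Set π := (fun q : π ⧸ N => q.out) '' (T : Set (π ⧸ N)) with hOT
  obtain ⟨W, V, hW1, hW2, hW3⟩ :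
      ∃ (W : π → List π) (V : π → N),
        (∀ g, ∀ x ∈ W g, x ∈ OT ∨ x⁻¹ ∈ OT) ∧
        (∀ g, (W g).length ≤ wordLength (T : Set (π ⧸ N)) ((g : π) : π ⧸ N)) ∧
        (∀ g, g = (W g).prod * ((V g : N) : π)) := by
    choose W V h1 h2 h3 using decomp T hT (N := N)
    exact ⟨W, V, h1, h2, h3⟩
  -- the combined generating set
  set U : Finset π := S ∪ S'.image (fun x : N => (x : π)) ∪ T.image (fun q : π ⧸ N => q.out)
    with hU
  have hUS : ∀ s ∈ S, s ∈ (U : Set π) := by intro s hs; simp [hU, hs]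
  have hUS' : ∀ x : N, x ∈ S' → (x : π) ∈ (U : Set π) := by
    intro x hx
    refine Finset.mem_coe.2 ?_
    simp only [hU, Finset.mem_union, Finset.mem_image]
    exact Or.inl (Or.inr ⟨x, hx, rfl⟩)
  have hUOT : ∀ x ∈ OT, x ∈ (U : Set π) := by
    rintro x ⟨q, hq, rfl⟩
    refine Finset.mem_coe.2 ?_
    simp only [hU, Finset.mem_union, Finset.mem_image]
    exact Or.inr ⟨q, Finset.mem_coe.1 hq, rfl⟩
  -- constants
  set c₁ : ℕ := U.sup fun u => wordLength (S : Set π) u with hc₁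
  have hUword : ∀ u ∈ (U : Set π), HasWord (S : Set π) u c₁ := fun u hu =>
    (hasWord_wordLength hS u).mono
      (Finset.le_sup (f := fun u => wordLength (S : Set π) u) hu)
  set CS : ℕ := S.sup fun s => wordLength (T : Set (π ⧸ N)) ((s : π) : π ⧸ N) with hCS
  set DS : ℕ := S.sup fun s => wordLength (S' : Set N) (V s) with hDS
  -- words in N mapped into U after applying iterates of φ
  have hNword : ∀ (k : ℕ) (x : N) (d : ℕ), HasWord (S' : Set N) x d →
      HasWord (U : Set π) ((⇑φ)^[k] (x : π)) (Lk S' ⇑φN k * d) := by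
    intro k x d hx
    have h1 : HasWord (S' : Set N) ((⇑φN)^[k] x) (Lk S' ⇑φN k * d) :=
      hasWord_map (iterate_map_one φN k) (iterate_map_mul φN k) (iterate_map_inv φN k)
        (fun y hy => hasWord_Lk hS' ⇑φN k hy) hx
    have h2 : HasWord (U : Set π) (((((⇑φN)^[k] x) : N) : π)) (1 * (Lk S' ⇑φN k * d)) := by
      refine hasWord_map (f := fun y : N => (y : π)) rfl (fun a b => rfl) (fun a => rfl)
        (fun y hy => hasWord_single (Or.inl (hUS' y hy))) h1
    rw [one_mul, hcoeiter] at h2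
    exact h2
  -- reduce to an epsilon of room
  have key : ∀ ε : ℝ, 0 < ε → GR S ⇑φ ≤ R + ε := by
    intro ε hε
    obtain ⟨m₁, hm₁⟩ := exists_term_lt
      (show GR T ⇑φQ < GR T ⇑φQ + ε by linarith)
    obtain ⟨m₂, hm₂⟩ := exists_term_lt
      (show GR S' ⇑φN < GR S' ⇑φN + ε by linarith)
    set m : ℕ := (m₁ : ℕ) * (m₂ : ℕ) with hm
    have hm1 : 1 ≤ m := Nat.one_le_iff_ne_zero.2 (by positivity)
    have hm₁0 : ((m₁ : ℕ) : ℝ) ≠ 0 := by positivity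
    have hm₂0 : ((m₂ : ℕ) : ℝ) ≠ 0 := by positivity
    set P : ℕ := Lk T ⇑φQ m with hP
    set B : ℕ := Lk S' ⇑φN m with hB
    have hPbound : (P : ℝ) ^ ((m : ℝ))⁻¹ < GR T ⇑φQ + ε := by
      have hle1 : P ≤ (Lk T ⇑φQ (m₁ : ℕ)) ^ (m₂ : ℕ) := Lk_mul_le T hT φQ _ _
      have hle : (P : ℝ) ^ ((m : ℝ))⁻¹ ≤
          (((Lk T ⇑φQ (m₁ : ℕ)) : ℝ) ^ (m₂ : ℕ)) ^ ((m : ℝ))⁻¹ :=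
        Real.rpow_le_rpow (Nat.cast_nonneg _) (by exact_mod_cast hle1) (by positivity)
      rw [← Real.rpow_natCast ((Lk T ⇑φQ (m₁ : ℕ) : ℝ)) (m₂ : ℕ),
        ← Real.rpow_mul (Nat.cast_nonneg _)] at hle
      have hexp : ((m₂ : ℕ) : ℝ) * ((m : ℝ))⁻¹ = (((m₁ : ℕ) : ℝ))⁻¹ := by
        rw [hm]; push_cast; field_simp; try ring
      rw [hexp] at hle
      exact lt_of_le_of_lt hle hm₁
    have hBbound : (B : ℝ) ^ ((m : ℝ))⁻¹ < GR S' ⇑φN + ε := by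
      have hle1 : B ≤ (Lk S' ⇑φN (m₂ : ℕ)) ^ (m₁ : ℕ) := by
        have := Lk_mul_le S' hS' φN (m₂ : ℕ) (m₁ : ℕ)
        rwa [show (m₂ : ℕ) * (m₁ : ℕ) = m by rw [hm]; ring] at this
      have hle : (B : ℝ) ^ ((m : ℝ))⁻¹ ≤
          (((Lk S' ⇑φN (m₂ : ℕ)) : ℝ) ^ (m₁ : ℕ)) ^ ((m : ℝ))⁻¹ :=
        Real.rpow_le_rpow (Nat.cast_nonneg _) (by exact_mod_cast hle1) (by positivity)
      rw [← Real.rpow_natCast ((Lk S' ⇑φN (m₂ : ℕ) : ℝ)) (m₁ : ℕ),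
        ← Real.rpow_mul (Nat.cast_nonneg _)] at hle
      have hexp : ((m₁ : ℕ) : ℝ) * ((m : ℝ))⁻¹ = (((m₂ : ℕ) : ℝ))⁻¹ := by
        rw [hm]; push_cast; field_simp; try ring
      rw [hexp] at hle
      exact lt_of_le_of_lt hle hm₂
    -- length of lifted words for iterates
    have hWlen : ∀ t ∈ T, (W ((⇑φ)^[m] (Quotient.out t))).length ≤ P := by
      intro t ht
      refine (hW2 _).trans ?_
      have hq : ((((⇑φ)^[m] (Quotient.out t)) : π) : π ⧸ N) = (⇑φQ)^[m] t := by
        rw [hmkiter m (Quotient.out t), mk_out_eq]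
      rw [hq]
      exact Finset.le_sup (f := fun q => wordLength (T : Set (π ⧸ N)) ((⇑φQ)^[m] q)) ht
    set D : ℕ := T.sup fun t => wordLength (S' : Set N) (V ((⇑φ)^[m] (Quotient.out t)))
      with hD
    have hνword : ∀ t ∈ T, HasWord (S' : Set N) (V ((⇑φ)^[m] (Quotient.out t))) D := by
      intro t ht
      exact (hasWord_wordLength hS' _).mono
        (Finset.le_sup (f := fun t => wordLength (S' : Set N) (V ((⇑φ)^[m] (Quotient.out t)))) ht)
    by_cases hM : 1 < R + ε
    · -- main case
      set R' : ℕ := max (max P B) 1 with hR'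
      have hP_le : P ≤ R' := le_trans (le_max_left _ _) (le_max_left _ _)
      have hB_le : B ≤ R' := le_trans (le_max_right _ _) (le_max_left _ _)
      have h1_le : 1 ≤ R' := le_max_right _ _
      -- the main induction
      have hclaim : ∀ j : ℕ, ∀ t ∈ T,
          HasWord (U : Set π) ((⇑φ)^[m * j] (Quotient.out t)) ((1 + D * j) * R' ^ j) := by
        intro j
        induction j with
        | zero =>
            intro t ht
            have h0 : HasWord (U : Set π) (Quotient.out t) 1 :=
              hasWord_single (Or.inl (hUOT _ ⟨t, Finset.mem_coe.2 ht, rfl⟩))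
            simpa using h0
        | succ j ih =>
            intro t ht
            have e1 : (⇑φ)^[m * (j+1)] (Quotient.out t) =
                (⇑φ)^[m * j] ((W ((⇑φ)^[m] (Quotient.out t))).prod) *
                (⇑φ)^[m * j] ((V ((⇑φ)^[m] (Quotient.out t)) : N) : π) := by
              rw [show m * (j+1) = m * j + m by ring, Function.iterate_add_apply,
                ← iterate_map_mul φ (m * j),
                (hW3 ((⇑φ)^[m] (Quotient.out t))).symm]
            rw [e1]
            have part1 : HasWord (U : Set π)
                ((⇑φ)^[m * j] ((W ((⇑φ)^[m] (Quotient.out t))).prod))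
                (((1 + D * j) * R' ^ j) * P) := by
              refine hasWord_map (iterate_map_one φ _) (iterate_map_mul φ _)
                (iterate_map_inv φ _) (fun x hx => ?_)
                ⟨W ((⇑φ)^[m] (Quotient.out t)), hW1 _, rfl, hWlen t ht⟩
              obtain ⟨q, hq, rfl⟩ := hx
              exact ih q (Finset.mem_coe.1 hq)
            have part2 : HasWord (U : Set π)
                ((⇑φ)^[m * j] ((V ((⇑φ)^[m] (Quotient.out t)) : N) : π))
                (B ^ j * D) := by
              refine (hNword (m * j) _ D (hνword t ht)).mono ?_
              exact Nat.mul_le_mul_right _ (Lk_mul_le S' hS' φN m j)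
            refine (part1.mul part2).mono ?_
            have hpow : R' ^ j ≤ R' ^ (j+1) := Nat.pow_le_pow_right h1_le (Nat.le_succ _)
            have hBj : B ^ j ≤ R' ^ j := Nat.pow_le_pow_left hB_le j
            calc (1 + D * j) * R' ^ j * P + B ^ j * D
                ≤ (1 + D * j) * R' ^ j * R' + R' ^ j * D :=
                  Nat.add_le_add (Nat.mul_le_mul_left _ hP_le) (Nat.mul_le_mul_right _ hBj)
              _ = (1 + D * j) * R' ^ (j+1) + R' ^ j * D := by ring
              _ ≤ (1 + D * j) * R' ^ (j+1) + R' ^ (j+1) * D :=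
                  Nat.add_le_add_left (Nat.mul_le_mul_right _ hpow) _
              _ ≤ (1 + D * (j+1)) * R' ^ (j+1) := le_of_eq (by ring)
      -- the claim for the original generators
      set c₆ : ℕ := c₁ * (CS * (1 + D) + DS) + 1 with hc₆
      have hc₆1 : 1 ≤ c₆ := Nat.le_add_left 1 _
      have hF : ∀ j : ℕ, Lk S ⇑φ (m * j) ≤ c₆ * (1 + j) * R' ^ j := by
        intro j
        have hstep : ∀ s ∈ S, HasWord (S : Set π) ((⇑φ)^[m * j] s)
            (c₁ * ((1 + D * j) * R' ^ j * CS + B ^ j * DS)) := by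
          intro s hs
          have e : (⇑φ)^[m * j] s =
              (⇑φ)^[m * j] ((W s).prod) * (⇑φ)^[m * j] ((V s : N) : π) := by
            conv_lhs => rw [show s = (W s).prod * ((V s : N) : π) from hW3 s]
            rw [iterate_map_mul φ]
          have p1 : HasWord (U : Set π) ((⇑φ)^[m * j] ((W s).prod))
              (((1 + D * j) * R' ^ j) * CS) := by
            refine hasWord_map (iterate_map_one φ _) (iterate_map_mul φ _)
              (iterate_map_inv φ _) (fun x hx => ?_)
              ⟨W s, hW1 s, rfl, (hW2 s).trans (Finset.le_sup
                (f := fun s => wordLength (T : Set (π ⧸ N)) ((s : π) : π ⧸ N)) hs)⟩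
            obtain ⟨q, hq, rfl⟩ := hx
            exact hclaim j q (Finset.mem_coe.1 hq)
          have p2 : HasWord (U : Set π) ((⇑φ)^[m * j] ((V s : N) : π)) (B ^ j * DS) := by
            refine (hNword (m * j) _ DS ((hasWord_wordLength hS' _).mono
              (Finset.le_sup (f := fun s => wordLength (S' : Set N) (V s)) hs))).mono ?_
            exact Nat.mul_le_mul_right _ (Lk_mul_le S' hS' φN m j)
          have hcomb : HasWord (U : Set π) ((⇑φ)^[m * j] s)
              ((1 + D * j) * R' ^ j * CS + B ^ j * DS) := by
            rw [e]; exact p1.mul p2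
          exact hasWord_map (f := fun x : π => x) rfl (fun a b => rfl) (fun a => rfl)
            (fun u hu => hUword u hu) hcomb
        refine (Lk_le hstep).trans ?_
        have hBj : B ^ j ≤ R' ^ j := Nat.pow_le_pow_left hB_le j
        have h1 : (1 + D * j) ≤ (1 + D) * (1 + j) := by nlinarith
        calc c₁ * ((1 + D * j) * R' ^ j * CS + B ^ j * DS)
            ≤ c₁ * ((1 + D) * (1 + j) * R' ^ j * CS + R' ^ j * ((1 + j) * DS)) := by
              refine Nat.mul_le_mul_left _ (Nat.add_le_add ?_ ?_)
              · exact Nat.mul_le_mul_right _ (Nat.mul_le_mul_right _ h1)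
              · refine Nat.mul_le_mul hBj (Nat.le_mul_of_pos_left _ (by omega))
          _ ≤ c₆ * (1 + j) * R' ^ j := by rw [hc₆]; ring_nf; nlinarith [Nat.zero_le (R' ^ j), Nat.zero_le (j * R' ^ j)]
      -- pass to real numbers
      set Wr : ℝ := (R' : ℝ) ^ ((m : ℝ))⁻¹ with hWr
      have hWrlt : Wr < R + ε := by
        rcases max_cases (max P B) 1 with ⟨h1, _⟩ | ⟨h1, _⟩
        · rcases max_cases P B with ⟨h3, _⟩ | ⟨h3, _⟩
          · rw [hWr, hR', h1, h3]
            exact lt_of_lt_of_le hPbound (add_le_add_left (le_max_right _ _) ε)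
          · rw [hWr, hR', h1, h3]
            exact lt_of_lt_of_le hBbound
              (add_le_add_left (le_max_left _ _) ε)
        · rw [hWr, hR', h1, Nat.cast_one, Real.one_rpow]
          exact hM
      have hmain : ∀ j : ℕ, 1 ≤ j →
          GR S ⇑φ ≤ ((c₆ * (1 + j) : ℕ) : ℝ) ^ (((m * j : ℕ) : ℝ))⁻¹ * Wr := by
        intro j hj
        have hk : 0 < m * j := by positivity
        have h1 := GR_le_term S ⇑φ ⟨m * j, hk⟩
        have h2 : ((Lk S ⇑φ (m * j) : ℕ) : ℝ) ≤ ((c₆ * (1 + j) * R' ^ j : ℕ) : ℝ) :=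
          Nat.cast_le.2 (hF j)
        have h3 : ((Lk S ⇑φ (m * j) : ℕ) : ℝ) ^ (((m * j : ℕ) : ℝ))⁻¹ ≤
            ((c₆ * (1 + j) * R' ^ j : ℕ) : ℝ) ^ (((m * j : ℕ) : ℝ))⁻¹ :=
          Real.rpow_le_rpow (Nat.cast_nonneg _) h2 (by positivity)
        have h4 : ((c₆ * (1 + j) * R' ^ j : ℕ) : ℝ) ^ (((m * j : ℕ) : ℝ))⁻¹ =
            ((c₆ * (1 + j) : ℕ) : ℝ) ^ (((m * j : ℕ) : ℝ))⁻¹ * Wr := by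
          have hx : ((c₆ * (1 + j) * R' ^ j : ℕ) : ℝ) =
              ((c₆ * (1 + j) : ℕ) : ℝ) * ((R' : ℝ)) ^ (j : ℕ) := by push_cast; ring
          rw [hx, Real.mul_rpow (by positivity) (by positivity)]
          congr 1
          rw [← Real.rpow_natCast ((R' : ℝ)) j, ← Real.rpow_mul (Nat.cast_nonneg _), hWr]
          congr 1
          have hj0 : ((j : ℕ) : ℝ) ≠ 0 := by
            simp only [ne_eq, Nat.cast_eq_zero]; omega
          have hm0 : ((m : ℕ) : ℝ) ≠ 0 := by positivity
          push_cast
          field_simp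
        calc GR S ⇑φ ≤ ((Lk S ⇑φ (m * j) : ℕ) : ℝ) ^ (((m * j : ℕ) : ℝ))⁻¹ := h1
          _ ≤ ((c₆ * (1 + j) * R' ^ j : ℕ) : ℝ) ^ (((m * j : ℕ) : ℝ))⁻¹ := h3
          _ = ((c₆ * (1 + j) : ℕ) : ℝ) ^ (((m * j : ℕ) : ℝ))⁻¹ * Wr := h4
      have ht := (tendsto_aux c₆ m hc₆1 hm1).mul_const Wr
      rw [one_mul] at ht
      have hfin : GR S ⇑φ ≤ Wr :=
        ge_of_tendsto ht (Filter.eventually_atTop.2 ⟨1, fun j hj => hmain j hj⟩)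
      linarith
    · -- degenerate case : R + ε ≤ 1  forces P = B = 0
      push_neg at hM
      have hP0 : P = 0 := by
        by_contra h
        have h1 : (1 : ℝ) ≤ (P : ℝ) := by exact_mod_cast Nat.one_le_iff_ne_zero.2 h
        have : (1 : ℝ) ≤ (P : ℝ) ^ ((m : ℝ))⁻¹ := by
          calc (1:ℝ) = (1:ℝ) ^ ((m : ℝ))⁻¹ := (Real.one_rpow _).symm
            _ ≤ (P : ℝ) ^ ((m : ℝ))⁻¹ := Real.rpow_le_rpow (by norm_num) h1 (by positivity)
        have hRe : GR T ⇑φQ + ε ≤ R + ε := add_le_add_left (le_max_right _ _) ε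
        linarith
      have hB0 : B = 0 := by
        by_contra h
        have h1 : (1 : ℝ) ≤ (B : ℝ) := by exact_mod_cast Nat.one_le_iff_ne_zero.2 h
        have : (1 : ℝ) ≤ (B : ℝ) ^ ((m : ℝ))⁻¹ := by
          calc (1:ℝ) = (1:ℝ) ^ ((m : ℝ))⁻¹ := (Real.one_rpow _).symm
            _ ≤ (B : ℝ) ^ ((m : ℝ))⁻¹ := Real.rpow_le_rpow (by norm_num) h1 (by positivity)
        have hRe : GR S' ⇑φN + ε ≤ R + ε := add_le_add_left (le_max_left _ _) ε
        linarith
      -- every element of N dies after m steps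
      have hkill : ∀ x : N, (⇑φN)^[m] x = 1 := by
        intro x
        have h1 : HasWord (S' : Set N) ((⇑φN)^[m] x) (B * wordLength (S' : Set N) x) :=
          hasWord_map (iterate_map_one φN m) (iterate_map_mul φN m) (iterate_map_inv φN m)
            (fun y hy => hasWord_Lk hS' ⇑φN m hy) (hasWord_wordLength hS' x)
        rw [hB0, zero_mul] at h1
        exact h1.eq_one
      -- lifted generators die after 2m steps
      have htkill : ∀ t ∈ T, (⇑φ)^[m * 2] (Quotient.out t) = 1 := by
        intro t ht
        have hw0 : W ((⇑φ)^[m] (Quotient.out t)) = [] :=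
          List.length_eq_zero_iff.1 (Nat.le_zero.1 (hP0 ▸ hWlen t ht))
        have he : (⇑φ)^[m] (Quotient.out t) = ((V ((⇑φ)^[m] (Quotient.out t)) : N) : π) := by
          conv_lhs => rw [hW3 ((⇑φ)^[m] (Quotient.out t))]
          rw [hw0]; simp
        rw [show m * 2 = m + m by ring, Function.iterate_add_apply, he, ← hcoeiter, hkill]
        simp
      have hLk0 : Lk S ⇑φ (m * 2) = 0 := by
        refine Nat.le_zero.1 (Lk_le fun s hs => ?_)
        have e : (⇑φ)^[m * 2] s =
            (⇑φ)^[m * 2] ((W s).prod) * (⇑φ)^[m * 2] ((V s : N) : π) := by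
          conv_lhs => rw [show s = (W s).prod * ((V s : N) : π) from hW3 s]
          rw [iterate_map_mul φ]
        have p1 : (⇑φ)^[m * 2] ((W s).prod) = 1 := by
          have : HasWord (S : Set π) ((⇑φ)^[m * 2] ((W s).prod)) (0 * (W s).length) := by
            refine hasWord_map (iterate_map_one φ _) (iterate_map_mul φ _)
              (iterate_map_inv φ _) (fun x hx => ?_) ⟨W s, hW1 s, rfl, le_rfl⟩
            obtain ⟨q, hq, rfl⟩ := hx
            rw [htkill q (Finset.mem_coe.1 hq)]
            exact hasWord_one _
          rw [zero_mul] at this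
          exact this.eq_one
        have p2 : (⇑φ)^[m * 2] ((V s : N) : π) = 1 := by
          rw [← hcoeiter, show m * 2 = m + m by ring, Function.iterate_add_apply, hkill]
          simp
        rw [e, p1, p2, mul_one]
        exact hasWord_one _
      have h1 : GR S ⇑φ ≤ ((Lk S ⇑φ (m * 2) : ℕ) : ℝ) ^ (((m * 2 : ℕ) : ℝ))⁻¹ :=
        GR_le_term S ⇑φ ⟨m * 2, by positivity⟩
      rw [hLk0] at h1
      have h2 : ((0 : ℕ) : ℝ) ^ ((((m * 2 : ℕ) : ℕ) : ℝ))⁻¹ = 0 := by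
        rw [Nat.cast_zero]
        refine Real.zero_rpow ?_
        have : (0:ℝ) < ((m * 2 : ℕ) : ℝ) := by positivity
        positivity
      rw [h2] at h1
      linarith
  by_contra hcon
  push_neg at hcon
  have := key ((GR S ⇑φ - R) / 2) (by linarith)
  linarith
end

section
/- Let π be a finitely generated group, φ: π → π an endomorphism, and π' a φ-invariant, finitely generated, undistorted subgroup of π. Then GR(φ|_{π'}) ≤ GR(φ). If, in addition, π' is a normal subgroup of π, then GR(φ) = max{GR(φ|_{π'}), GR(φ̂)}, where φ̂ is the induced endomorphism of π/π'. -/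
open Filter Topology

/-- The distortion function `Δ^π_{π'}(n)` of a subgroup `N` (with finite generating set
`S'`) inside `π` (with finite generating set `S`). -/
noncomputable def distortion {G : Type*} [Group G] (S : Finset G) (N : Subgroup G)
    (S' : Finset N) (n : ℕ) : ℕ :=
  sSup {m : ℕ | ∃ γ : N, wordLength (S' : Set N) γ = m ∧ wordLength (S : Set G) (γ : G) ≤ n}

/-- `f ≼ g`: there is `c > 0` with `f(n) ≤ c·g(c·n)` for all `n > 0`. -/
def NatDominated (f g : ℕ → ℕ) : Prop :=
  ∃ c : ℕ, 0 < c ∧ ∀ n : ℕ, 0 < n → f n ≤ c * g (c * n)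

/-- `f ≈ g`: `f ≼ g` and `g ≼ f`. -/
def NatEquiv (f g : ℕ → ℕ) : Prop := NatDominated f g ∧ NatDominated g f

/-- The subgroup `N` is undistorted in `G` if its distortion function is equivalent
to the identity. -/
def Undistorted {G : Type*} [Group G] (S : Finset G) (N : Subgroup G) (S' : Finset N) : Prop :=
  NatEquiv (distortion S N S') (fun n => n)


set_option linter.unnecessarySimpa false
namespace GRaux

variable {G : Type*} [Group G] {S : Set G}



lemma wl_le {g : G} (w : List G) (hw : ∀ x ∈ w, x ∈ S ∨ x⁻¹ ∈ S) (hp : w.prod = g) :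

    wordLength S g ≤ w.length := Nat.sInf_le ⟨w, rfl, hw, hp⟩



lemma wl_one : wordLength S (1 : G) = 0 :=

  Nat.le_zero.mp (wl_le [] (by simp) (by simp))



lemma exists_word (hS : Subgroup.closure S = ⊤) (g : G) :

    ∃ w : List G, (∀ x ∈ w, x ∈ S ∨ x⁻¹ ∈ S) ∧ w.prod = g ∧ w.length = wordLength S g := by

  have hg : g ∈ Subgroup.closure S := hS ▸ Subgroup.mem_top g

  have hne : {n : ℕ | ∃ w : List G, w.length = n ∧ (∀ x ∈ w, x ∈ S ∨ x⁻¹ ∈ S) ∧ w.prod = g}.Nonempty := by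

    induction hg using Subgroup.closure_induction with

    | mem x hx => exact ⟨1, [x], rfl, by simpa using Or.inl hx, by simp⟩

    | one => exact ⟨0, [], rfl, by simp, by simp⟩

    | mul x y hx hy ihx ihy =>

      obtain ⟨a, wx, hax, hwx, hpx⟩ := ihx

      obtain ⟨b, wy, hby, hwy, hpy⟩ := ihy

      exact ⟨a + b, wx ++ wy, by simp [hax, hby], by

        intro z hz; rcases List.mem_append.mp hz with h | h

        exacts [hwx z h, hwy z h], by simp [hpx, hpy]⟩

    | inv x hx ihx =>

      obtain ⟨a, w, haw, hw, hp⟩ := ihx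

      refine ⟨a, (w.map (fun x => x⁻¹)).reverse, by simp [haw], ?_, by

        rw [← List.prod_inv_reverse, hp]⟩

      intro z hz

      simp only [List.mem_reverse, List.mem_map] at hz

      obtain ⟨y, hy, rfl⟩ := hz

      rcases hw y hy with h | h

      · exact Or.inr (by simpa using h)

      · exact Or.inl h

  obtain ⟨w, h1, h2, h3⟩ := Nat.sInf_mem hne

  exact ⟨w, h2, h3, h1⟩



lemma wl_mul_le (hS : Subgroup.closure S = ⊤) (g h : G) :

    wordLength S (g * h) ≤ wordLength S g + wordLength S h := by

  obtain ⟨w1, hw1, hp1, hl1⟩ := exists_word hS g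

  obtain ⟨w2, hw2, hp2, hl2⟩ := exists_word hS h

  have := wl_le (S := S) (g := g * h) (w1 ++ w2) (by

    intro z hz; rcases List.mem_append.mp hz with h | h

    exacts [hw1 z h, hw2 z h]) (by simp [hp1, hp2])

  simpa [hl1, hl2] using this



lemma wl_inv_le (hS : Subgroup.closure S = ⊤) (g : G) :

    wordLength S g⁻¹ ≤ wordLength S g := by

  obtain ⟨w, hw, hp, hl⟩ := exists_word hS g

  have := wl_le (S := S) ((w.map (fun x => x⁻¹)).reverse) (by

    intro z hz

    simp only [List.mem_reverse, List.mem_map] at hz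

    obtain ⟨y, hy, rfl⟩ := hz

    rcases hw y hy with h | h

    · exact Or.inr (by simpa using h)

    · exact Or.inl h) (by rw [← List.prod_inv_reverse, hp])

  simpa [hl] using this



lemma wl_eq_zero_iff (hS : Subgroup.closure S = ⊤) {g : G} :

    wordLength S g = 0 ↔ g = 1 := by

  constructor

  · intro h

    obtain ⟨w, _, hp, hl⟩ := exists_word hS g

    rw [h, List.length_eq_zero_iff] at hl

    simp [hl] at hp; exact hp.symm

  · rintro rfl; exact wl_one



lemma wl_list_prod_le (hS : Subgroup.closure S = ⊤) (l : List G) :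

    wordLength S l.prod ≤ (l.map (wordLength S)).sum := by

  induction l with

  | nil => simpa using wl_one.le

  | cons x t ih =>

    simp only [List.prod_cons, List.map_cons, List.sum_cons]

    exact (wl_mul_le hS x t.prod).trans (by omega)



/-- pushforward along a hom. -/

lemma wl_map_le {H : Type*} [Group H] {T : Set H} (hT : Subgroup.closure T = ⊤)

    (hS : Subgroup.closure S = ⊤) (ψ : G →* H) (M : ℕ)

    (hM : ∀ s ∈ S, wordLength T (ψ s) ≤ M) (g : G) :

    wordLength T (ψ g) ≤ M * wordLength S g := by

  obtain ⟨w, hw, hp, hl⟩ := exists_word hS g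

  rw [← hl, ← hp]

  clear hp hl

  induction w with

  | nil => simpa using wl_one.le

  | cons x t ih =>

    have hx : wordLength T (ψ x) ≤ M := by

      rcases hw x (by simp) with h | h

      · exact hM x h

      · calc wordLength T (ψ x) = wordLength T ((ψ x⁻¹)⁻¹) := by simp

          _ ≤ wordLength T (ψ x⁻¹) := wl_inv_le hT _

          _ ≤ M := hM _ h

    have ht := ih (fun z hz => hw z (List.mem_cons_of_mem _ hz))

    calc wordLength T (ψ (x :: t).prod) = wordLength T (ψ x * ψ t.prod) := by simp

      _ ≤ wordLength T (ψ x) + wordLength T (ψ t.prod) := wl_mul_le hT _ _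

      _ ≤ M + M * t.length := by omega

      _ = M * (x :: t).length := by simp [Nat.mul_add, Nat.mul_succ]; ring



end GRaux

namespace GRaux



noncomputable def grseq (a : ℕ → ℕ) : ℝ := ⨅ k : ℕ+, (a k : ℝ) ^ (((k : ℕ) : ℝ))⁻¹



lemma grseq_bdd (a : ℕ → ℕ) : BddBelow (Set.range fun k : ℕ+ => (a k : ℝ) ^ (((k : ℕ) : ℝ))⁻¹) := by

  refine ⟨0, ?_⟩; rintro x ⟨k, rfl⟩; positivity



lemma grseq_nonneg (a : ℕ → ℕ) : 0 ≤ grseq a :=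

  le_ciInf fun k => by positivity



lemma grseq_eq_zero {a : ℕ → ℕ} {j : ℕ} (hj : 0 < j) (h : a j = 0) : grseq a = 0 := by

  refine le_antisymm ?_ (grseq_nonneg a)

  have := ciInf_le (grseq_bdd a) (⟨j, hj⟩ : ℕ+)

  simpa [grseq, h, Real.zero_rpow (by positivity : (((j:ℕ):ℝ))⁻¹ ≠ 0)] using this



lemma grseq_lt_one {a : ℕ → ℕ} (h : grseq a < 1) : ∃ j : ℕ, 0 < j ∧ a j = 0 := by

  obtain ⟨k, hk⟩ := exists_lt_of_ciInf_lt h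

  refine ⟨k, k.2, ?_⟩

  by_contra hne

  have h1 : (1 : ℝ) ≤ (a k : ℝ) := by exact_mod_cast Nat.one_le_iff_ne_zero.mpr hne

  have := Real.one_le_rpow h1 (by positivity : (0:ℝ) ≤ (((k:ℕ):ℝ))⁻¹)

  linarith



/-- geometric upper bound from grseq < λ, for submultiplicative sequences -/

lemma grseq_geom {a : ℕ → ℕ} (ha : ∀ k l, a (k + l) ≤ a k * a l)

    {lam : ℝ} (hlam : 1 ≤ lam) (h : grseq a < lam) :

    ∃ C : ℝ, 1 ≤ C ∧ ∀ k : ℕ, (a k : ℝ) ≤ C * lam ^ k := by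

  obtain ⟨j, hj⟩ := exists_lt_of_ciInf_lt h

  have hjpos : (0:ℕ) < (j:ℕ) := j.2

  have hjne : ((j:ℕ)) ≠ 0 := Nat.pos_iff_ne_zero.mp hjpos

  have haj : (a j : ℝ) < lam ^ (j:ℕ) := by

    have h0 : (0:ℝ) ≤ (a j : ℝ) := by positivity

    calc (a j : ℝ) = ((a j : ℝ) ^ ((((j:ℕ)):ℝ))⁻¹) ^ (j:ℕ) := (Real.rpow_inv_natCast_pow h0 hjne).symm

      _ < lam ^ (j:ℕ) := by

          apply pow_lt_pow_left₀ hj (by positivity)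

          exact hjne

  -- a (q*j + r) ≤ a j ^ q * a r

  have key : ∀ q r : ℕ, a (q * (j:ℕ) + r) ≤ a j ^ q * a r := by

    intro q

    induction q with

    | zero => intro r; simp

    | succ q ih =>

      intro r

      have : (q+1) * (j:ℕ) + r = (j:ℕ) + (q * (j:ℕ) + r) := by ring

      rw [this]

      calc a ((j:ℕ) + (q * (j:ℕ) + r)) ≤ a j * a (q * (j:ℕ) + r) := ha _ _

        _ ≤ a j * (a j ^ q * a r) := Nat.mul_le_mul_left _ (ih r)

        _ = a j ^ (q+1) * a r := by ring

  set C0 : ℝ := (((Finset.range (j:ℕ)).sup a : ℕ) : ℝ) + 1 with hC0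

  have hC01 : 1 ≤ C0 := by

    have : (0:ℝ) ≤ (((Finset.range (j:ℕ)).sup a : ℕ) : ℝ) := Nat.cast_nonneg _

    linarith

  refine ⟨C0, hC01, fun k => ?_⟩

  have hdm := Nat.div_add_mod k (j:ℕ)

  set q := k / (j:ℕ) with hq; set r := k % (j:ℕ) with hrdef

  have hr : r < (j:ℕ) := Nat.mod_lt _ hjpos

  have hk : q * (j:ℕ) + r = k := by rw [Nat.mul_comm]; exact hdm

  have h1 : (a k : ℝ) ≤ (a j : ℝ) ^ q * (a r : ℝ) := by

    have := key q r

    rw [hk] at this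

    exact_mod_cast this

  have h2 : (a j : ℝ) ^ q ≤ (lam ^ (j:ℕ)) ^ q := pow_le_pow_left₀ (by positivity) haj.le q

  have h3 : (lam ^ (j:ℕ)) ^ q = lam ^ ((j:ℕ) * q) := by rw [← pow_mul]

  have h4 : lam ^ ((j:ℕ) * q) ≤ lam ^ k := by

    apply pow_le_pow_right₀ hlam

    omega

  have h5 : (a r : ℝ) ≤ C0 := by

    have : a r ≤ (Finset.range (j:ℕ)).sup a := Finset.le_sup (Finset.mem_range.mpr hr)

    have := (Nat.cast_le (α := ℝ)).mpr this

    linarith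

  calc (a k : ℝ) ≤ (a j : ℝ) ^ q * (a r : ℝ) := h1

    _ ≤ lam ^ k * C0 := by

        apply mul_le_mul _ h5 (by positivity) (by positivity)

        calc (a j:ℝ) ^ q ≤ (lam ^ (j:ℕ)) ^ q := h2

          _ = lam ^ ((j:ℕ)*q) := h3

          _ ≤ lam ^ k := h4

    _ = C0 * lam ^ k := mul_comm _ _



lemma tendsto_c_rpow {C : ℝ} (hC : 0 < C) :

    Tendsto (fun k : ℕ => C ^ (((k:ℕ):ℝ))⁻¹) atTop (𝓝 1) := by

  have h1 : Tendsto (fun k : ℕ => (((k:ℕ):ℝ))⁻¹ * Real.log C) atTop (𝓝 0) := by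

    simpa using (tendsto_inv_atTop_nhds_zero_nat (𝕜 := ℝ)).mul_const (Real.log C)

  have h2 : Tendsto (fun k : ℕ => Real.exp ((((k:ℕ):ℝ))⁻¹ * Real.log C)) atTop (𝓝 1) := by

    simpa [Function.comp_def] using (Real.continuous_exp.tendsto 0).comp h1

  refine h2.congr fun k => ?_

  rw [Real.rpow_def_of_pos hC, mul_comm]



lemma grseq_le_of_geom {a : ℕ → ℕ} {C lam : ℝ} (hC : 1 ≤ C) (hlam : 0 ≤ lam)

    (h : ∀ k : ℕ, 0 < k → (a k : ℝ) ≤ C * lam ^ k) : grseq a ≤ lam := by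

  have key : ∀ k : ℕ, 0 < k → grseq a ≤ C ^ (((k:ℕ):ℝ))⁻¹ * lam := by

    intro k hk

    have hkne : (k:ℕ) ≠ 0 := hk.ne'

    have h1 : grseq a ≤ (a k : ℝ) ^ (((k:ℕ):ℝ))⁻¹ := by

      have := ciInf_le (grseq_bdd a) (⟨k, hk⟩ : ℕ+)

      simpa [grseq] using this

    have h2 : ((a k : ℝ)) ^ (((k:ℕ):ℝ))⁻¹ ≤ (C * lam ^ k) ^ (((k:ℕ):ℝ))⁻¹ :=

      Real.rpow_le_rpow (by positivity) (h k hk) (by positivity)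

    have h3 : (C * lam ^ k) ^ (((k:ℕ):ℝ))⁻¹ = C ^ (((k:ℕ):ℝ))⁻¹ * lam := by

      rw [Real.mul_rpow (by positivity) (by positivity),

        Real.pow_rpow_inv_natCast hlam hkne]

    linarith

  have ht : Tendsto (fun k : ℕ => C ^ (((k:ℕ):ℝ))⁻¹ * lam) atTop (𝓝 (1 * lam)) :=

    (tendsto_c_rpow (by linarith)).mul_const lam

  rw [one_mul] at ht

  refine ge_of_tendsto ht ?_

  filter_upwards [eventually_gt_atTop 0] with k hk using key k hk



/-- the workhorse comparison lemma -/

lemma grseq_le_grseq {a b : ℕ → ℕ} (hb : ∀ k l, b (k + l) ≤ b k * b l)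

    (c : ℕ) (h : ∀ k, 0 < k → a k ≤ c * b k) : grseq a ≤ grseq b := by

  rcases lt_or_ge (grseq b) 1 with hlt | hge

  · obtain ⟨j, hj, hbj⟩ := grseq_lt_one hlt

    have haj : a j = 0 := by have h2 := h j hj; rw [hbj, Nat.mul_zero] at h2; omega

    rw [grseq_eq_zero hj haj]

    exact grseq_nonneg b

  · refine le_of_forall_gt_imp_ge_of_dense fun lam hlam => ?_

    have hlam1 : 1 ≤ lam := le_trans hge hlam.le

    obtain ⟨C, hC1, hCb⟩ := grseq_geom hb hlam1 hlam

    refine grseq_le_of_geom (C := (c:ℝ) * C + 1)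

      (by

        have h0 : (0:ℝ) ≤ (c:ℝ) * C := by positivity

        linarith) (by linarith) ?_

    intro k hk

    have h1 : (a k : ℝ) ≤ (c : ℝ) * (b k : ℝ) := by exact_mod_cast h k hk

    have h2 := hCb k

    have hpow : (0:ℝ) ≤ lam ^ k := by positivity

    nlinarith [Nat.cast_nonneg (α := ℝ) (b k), Nat.cast_nonneg (α := ℝ) c]



lemma bernoulli_bound {d : ℝ} (hd : 1 < d) :

    ∃ C : ℝ, 1 ≤ C ∧ ∀ k : ℕ, ((k:ℝ) + 1) ≤ C * d ^ k := by

  refine ⟨max 1 (d - 1)⁻¹, le_max_left _ _, fun k => ?_⟩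

  set C := max 1 (d - 1)⁻¹

  have hC1 : 1 ≤ C := le_max_left _ _

  have hCd : 1 ≤ C * (d - 1) := by

    have h1 : (d-1)⁻¹ ≤ C := le_max_right _ _

    have h2 : 0 < d - 1 := by linarith

    calc (1:ℝ) = (d-1)⁻¹ * (d-1) := by field_simp

      _ ≤ C * (d-1) := by nlinarith

  have hber : 1 + (k:ℝ) * (d - 1) ≤ d ^ k := by

    have := one_add_mul_le_pow (a := d - 1) (by linarith) k

    simpa using this

  have hCpos : 0 < C := by linarith

  calc ((k:ℝ) + 1) ≤ C * (1 + (k:ℝ) * (d-1)) := by nlinarith [Nat.cast_nonneg (α := ℝ) k]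

    _ ≤ C * d ^ k := by nlinarith



end GRaux

namespace GRaux



section LkLemmas

variable {G : Type*} [Group G] (S : Finset G) (φ : G →* G)



lemma GR_eq_grseq (f : G → G) : GR S f = grseq (Lk S f) := rfl



lemma iterate_hom_mul (k : ℕ) (a b : G) : φ^[k] (a * b) = φ^[k] a * φ^[k] b := by

  induction k generalizing a b with

  | zero => simp

  | succ k ih => simp [Function.iterate_succ_apply, ih, map_mul]



noncomputable def iterHom (k : ℕ) : G →* G :=

  { toFun := φ^[k]

    map_one' := by induction k with

      | zero => simp

      | succ k ih => simp [Function.iterate_succ_apply', ih, map_one]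

    map_mul' := iterate_hom_mul φ k }



@[simp] lemma iterHom_apply (k : ℕ) (g : G) : iterHom φ k g = φ^[k] g := rfl



lemma wl_iterate_le (hS : Subgroup.closure (S : Set G) = ⊤) (l : ℕ) (g : G) :

    wordLength (S : Set G) (φ^[l] g) ≤ Lk S (⇑φ) l * wordLength (S : Set G) g := by

  have := wl_map_le (T := (S : Set G)) hS hS (iterHom φ l) (Lk S (⇑φ) l)

    (fun s hs => by

      exact Finset.le_sup (f := fun s => wordLength (S : Set G) (φ^[l] s)) hs) g

  simpa using this



lemma Lk_submult (hS : Subgroup.closure (S : Set G) = ⊤) : ∀ k l, Lk S (⇑φ) (k + l) ≤ Lk S (⇑φ) k * Lk S (⇑φ) l := by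

  intro k l

  apply Finset.sup_le

  intro s hs

  have h1 : φ^[k + l] s = φ^[l] (φ^[k] s) := by rw [Nat.add_comm]; exact Function.iterate_add_apply φ l k s

  rw [h1]

  calc wordLength (S : Set G) (φ^[l] (φ^[k] s))

      ≤ Lk S (⇑φ) l * wordLength (S : Set G) (φ^[k] s) := wl_iterate_le S φ hS l _

    _ ≤ Lk S (⇑φ) l * Lk S (⇑φ) k := Nat.mul_le_mul_left _ (Finset.le_sup (f := fun s => wordLength (S : Set G) (φ^[k] s)) hs)

    _ = Lk S (⇑φ) k * Lk S (⇑φ) l := Nat.mul_comm _ _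



lemma Lk_eq_zero_iff (hS : Subgroup.closure (S : Set G) = ⊤) {k : ℕ} (h : Lk S (⇑φ) k = 0) (g : G) : φ^[k] g = 1 := by

  have key : ∀ s ∈ (S : Set G), φ^[k] s = 1 := by

    intro s hs

    have : wordLength (S : Set G) (φ^[k] s) = 0 :=

      Nat.le_zero.mp (h ▸ Finset.le_sup (f := fun s => wordLength (S : Set G) (φ^[k] s)) hs)

    exact (wl_eq_zero_iff hS).mp this

  have hg : g ∈ Subgroup.closure (S : Set G) := hS ▸ Subgroup.mem_top g

  induction hg using Subgroup.closure_induction with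

  | mem x hx => exact key x hx

  | one => simpa using (iterHom φ k).map_one

  | mul x y hx hy ihx ihy => rw [iterate_hom_mul φ k, ihx, ihy, one_mul]

  | inv x hx ihx =>

    have : φ^[k] x⁻¹ = (φ^[k] x)⁻¹ := by

      simpa using (iterHom φ k).map_inv x

    rw [this, ihx, inv_one]



/-- cast of Finset.sup bound -/

lemma sup_cast_le {ι : Type*} (F : Finset ι) (f : ι → ℕ) {X : ℝ} (hX : 0 ≤ X)

    (h : ∀ i ∈ F, (f i : ℝ) ≤ X) : ((F.sup f : ℕ) : ℝ) ≤ X := by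

  rcases F.eq_empty_or_nonempty with rfl | hne

  · simpa using hX

  · obtain ⟨i, hi, heq⟩ := Finset.exists_mem_eq_sup F hne f

    rw [heq]; exact h i hi



lemma list_sum_le (l : List ℕ) {X : ℝ} (h : ∀ x ∈ l, (x : ℝ) ≤ X) :

    (l.sum : ℝ) ≤ l.length * X := by

  induction l with

  | nil => simp

  | cons x t ih =>

    have hx := h x (by simp)

    have ht := ih fun y hy => h y (List.mem_cons_of_mem _ hy)

    have hXx : (0:ℝ) ≤ X := le_trans (Nat.cast_nonneg x) hx

    rw [List.sum_cons, List.length_cons, Nat.cast_add, Nat.cast_add, Nat.cast_one]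

    nlinarith [Nat.cast_nonneg (α := ℝ) t.length]



end LkLemmas

end GRaux

namespace GRaux



section Dist

variable {G : Type*} [Group G]



lemma ball_finite (S : Finset G) (hS : Subgroup.closure (S : Set G) = ⊤) (n : ℕ) :

    {g : G | wordLength (S : Set G) g ≤ n}.Finite := by

  classical

  set A : Finset G := S ∪ S.image (fun x => x⁻¹) with hA

  have hfin : Finite ↥(A : Set G) := A.finite_toSet.to_subtype

  have hL : {l : List ↥(A : Set G) | l.length ≤ n}.Finite := List.finite_length_le _ n

  apply Set.Finite.subset (hL.image (fun l => (l.map Subtype.val).prod))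

  intro g hg

  obtain ⟨w, hw, hp, hl⟩ := exists_word hS g

  have hlen : w.length ≤ n := by rw [hl]; exact hg

  have hmem : ∀ x ∈ w, x ∈ (A : Set G) := by

    intro x hx

    rcases hw x hx with h | h

    · simp only [hA, Finset.coe_union, Set.mem_union, Finset.mem_coe]

      exact Or.inl h

    · simp only [hA, Finset.coe_union, Set.mem_union, Finset.mem_coe, Finset.mem_image]

      exact Or.inr ⟨x⁻¹, h, inv_inv x⟩

  refine ⟨w.pmap (fun x hx => (⟨x, hx⟩ : ↥(A : Set G))) hmem, ?_, ?_⟩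

  · simpa using hlen

  · simp only [List.map_pmap]

    rw [List.pmap_eq_map]

    simpa using hp



lemma distortion_set_bdd (S : Finset G) (hS : Subgroup.closure (S : Set G) = ⊤)

    (N : Subgroup G) (S' : Finset N) (n : ℕ) :

    BddAbove {m : ℕ | ∃ γ : N, wordLength (S' : Set N) γ = m ∧

      wordLength (S : Set G) (γ : G) ≤ n} := by

  have hb := ball_finite S hS n

  have hpre : ((Subtype.val : N → G) ⁻¹' {g : G | wordLength (S : Set G) g ≤ n}).Finite :=

    hb.preimage Subtype.val_injective.injOn

  refine ((hpre.image (fun γ => wordLength (S' : Set N) γ)).subset ?_).bddAbove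

  rintro m ⟨γ, rfl, hγ⟩

  exact ⟨γ, hγ, rfl⟩



lemma und_bound {S : Finset G} (hS : Subgroup.closure (S : Set G) = ⊤)

    {N : Subgroup G} {S' : Finset N} (hund : Undistorted S N S') :

    ∃ c : ℕ, ∀ γ : N, wordLength (S' : Set N) γ ≤ c * (c * wordLength (S : Set G) (γ : G)) := by

  obtain ⟨⟨c, hc, hcb⟩, -⟩ := hund

  refine ⟨c, fun γ => ?_⟩

  rcases Nat.eq_zero_or_pos (wordLength (S : Set G) (γ : G)) with h0 | hpos

  · have h1 : (γ : G) = 1 := (wl_eq_zero_iff hS).mp h0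

    have h2 : γ = 1 := by exact_mod_cast h1

    rw [h2, wl_one]

    exact Nat.zero_le _

  · have hmem : wordLength (S' : Set N) γ ∈ {m : ℕ | ∃ γ' : N,

        wordLength (S' : Set N) γ' = m ∧ wordLength (S : Set G) (γ' : G) ≤

          wordLength (S : Set G) (γ : G)} := ⟨γ, rfl, le_refl _⟩

    have h1 : wordLength (S' : Set N) γ ≤ distortion S N S' (wordLength (S : Set G) (γ : G)) :=

      le_csSup (distortion_set_bdd S hS N S' _) hmem

    exact h1.trans (hcb _ hpos)



end Dist

end GRaux



namespace GRaux
lemma prod_formula {H : Type*} [Group H] (r : H →* H) (mm nn : ℕ → H)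
    (hrec : ∀ k, nn (k+1) = mm k * r (nn k)) :
    ∀ k, nn k = (((List.range k).reverse.map (fun i => (⇑r)^[k-1-i] (mm i))).prod) * (⇑r)^[k] (nn 0) := by
  intro k
  induction k with
  | zero => simp
  | succ k ih =>
    have hrev : (List.range (k+1)).reverse = k :: (List.range k).reverse := by
      simp [List.range_succ]
    have hmap : (List.range k).reverse.map (⇑r ∘ fun i => (⇑r)^[k-1-i] (mm i))
        = (List.range k).reverse.map (fun i => (⇑r)^[k+1-1-i] (mm i)) := by
      apply List.map_congr_left
      intro i hi
      have hik : i < k := List.mem_range.mp (List.mem_reverse.mp hi)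
      simp only [Function.comp_apply]
      rw [← Function.iterate_succ_apply' (⇑r) (k-1-i) (mm i)]
      congr 1
      omega
    calc nn (k+1) = mm k * r (nn k) := hrec k
      _ = mm k * ((((List.range k).reverse.map (⇑r ∘ fun i => (⇑r)^[k-1-i] (mm i))).prod)
            * (⇑r)^[k+1] (nn 0)) := by
          rw [ih, map_mul, map_list_prod, List.map_map,
            ← Function.iterate_succ_apply' (⇑r) k (nn 0)]
      _ = (((List.range (k+1)).reverse.map (fun i => (⇑r)^[k+1-1-i] (mm i))).prod)
            * (⇑r)^[k+1] (nn 0) := by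
          rw [hrev, List.map_cons, List.prod_cons, ← hmap, mul_assoc]
          simp
end GRaux

set_option maxHeartbeats 1000000 in
/-- If `π'` is a `φ`-invariant, finitely generated, undistorted subgroup of
the finitely generated group `π`, then `GR(φ|_{π'}) ≤ GR(φ)`; and if moreover `π'` is
normal, then `GR(φ) = max{GR(φ|_{π'}), GR(φ̂)}`. -/
theorem GR_restriction_le_of_undistorted {π : Type*} [Group π] (S : Finset π)
    (hS : Subgroup.closure (S : Set π) = ⊤) (φ : π →* π)
    (N : Subgroup π) (hinv : ∀ g ∈ N, φ g ∈ N)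
    (S' : Finset N) (hS' : Subgroup.closure (S' : Set N) = ⊤)
    (hund : Undistorted S N S') :
    GR S' (fun x : N => (⟨φ x, hinv x x.2⟩ : N)) ≤ GR S ⇑φ ∧
    (∀ (_ : N.Normal) (T : Finset (π ⧸ N)),
      Subgroup.closure (T : Set (π ⧸ N)) = ⊤ →
      GR S ⇑φ = max (GR S' (fun x : N => (⟨φ x, hinv x x.2⟩ : N)))
        (GR T ⇑(QuotientGroup.map N N φ (fun g hg => hinv g hg)))) := by
  classical
  open GRaux in
  set restr : N →* N := (φ.comp N.subtype).codRestrict N (fun x => hinv x x.2) with hrestr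
  have hre : (fun x : N => (⟨φ x, hinv x x.2⟩ : N)) = ⇑restr := rfl
  obtain ⟨c, hc⟩ := GRaux.und_bound hS hund
  -- coe of restriction iterates
  have hcoe_iter : ∀ (k : ℕ) (x : N), ((((⇑restr)^[k] x) : N) : π) = φ^[k] (x : π) := by
    intro k
    induction k with
    | zero => intro x; rfl
    | succ k ih =>
      intro x
      rw [Function.iterate_succ_apply', Function.iterate_succ_apply']
      show (φ ((((⇑restr)^[k] x) : N) : π)) = φ (φ^[k] (x : π))
      rw [ih]
  -- Part 1
  have hEbd : ∀ γ : N, wordLength (S : Set π) (γ : π) ≤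
      (S'.sup fun x : N => wordLength (S : Set π) (x : π)) * wordLength (S' : Set N) γ := by
    intro γ
    exact GRaux.wl_map_le hS hS' N.subtype _
      (fun x hx => Finset.le_sup (f := fun x : N => wordLength (S : Set π) (x : π)) hx) γ
  have part1 : GR S' (fun x : N => (⟨φ x, hinv x x.2⟩ : N)) ≤ GR S ⇑φ := by
    rw [hre, GRaux.GR_eq_grseq, GRaux.GR_eq_grseq]
    set M := S'.sup fun x : N => wordLength (S : Set π) (x : π) with hM
    apply GRaux.grseq_le_grseq (GRaux.Lk_submult S φ hS) (c * c * M)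
    intro k _
    apply Finset.sup_le
    intro s' hs'
    calc wordLength (S' : Set N) ((⇑restr)^[k] s')
        ≤ c * (c * wordLength (S : Set π) ((((⇑restr)^[k] s') : N) : π)) := hc _
      _ = c * (c * wordLength (S : Set π) (φ^[k] (s' : π))) := by rw [hcoe_iter]
      _ ≤ c * (c * (Lk S (⇑φ) k * wordLength (S : Set π) (s' : π))) := by
          have := GRaux.wl_iterate_le S φ hS k (s' : π)
          exact Nat.mul_le_mul_left _ (Nat.mul_le_mul_left _ this)
      _ ≤ c * (c * (Lk S (⇑φ) k * M)) := by
          have : wordLength (S : Set π) (s' : π) ≤ M :=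
            Finset.le_sup (f := fun x : N => wordLength (S : Set π) (x : π)) hs'
          exact Nat.mul_le_mul_left _ (Nat.mul_le_mul_left _ (Nat.mul_le_mul_left _ this))
      _ = c * c * M * Lk S (⇑φ) k := by ring
  refine ⟨part1, ?_⟩
  intro hN T hT
  haveI := hN
  set φQ : π ⧸ N →* π ⧸ N := QuotientGroup.map N N φ (fun g hg => hinv g hg) with hφQ
  set p : π →* π ⧸ N := QuotientGroup.mk' N with hp
  have qiter : ∀ (k : ℕ) (g : π), (⇑φQ)^[k] (p g) = p (φ^[k] g) := by
    intro k
    induction k with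
    | zero => intro g; rfl
    | succ k ih =>
      intro g
      rw [Function.iterate_succ_apply', ih, Function.iterate_succ_apply']
      exact QuotientGroup.map_mk' N N φ _ _
  -- GR_Q ≤ GR
  have hM2bd : ∀ x : π, wordLength (T : Set (π ⧸ N)) (p x) ≤
      (S.sup fun s => wordLength (T : Set (π ⧸ N)) (p s)) * wordLength (S : Set π) x := by
    intro x
    exact GRaux.wl_map_le hT hS p _
      (fun s hs => Finset.le_sup (f := fun s => wordLength (T : Set (π ⧸ N)) (p s)) hs) x
  have σsurj : Function.Surjective ⇑p := QuotientGroup.mk'_surjective N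
  set σ : π ⧸ N → π := Function.surjInv σsurj with hσ
  have hσeq : ∀ q : π ⧸ N, p (σ q) = q := Function.surjInv_eq σsurj
  have partQ : GR T ⇑φQ ≤ GR S ⇑φ := by
    rw [GRaux.GR_eq_grseq, GRaux.GR_eq_grseq]
    set M2 := S.sup fun s => wordLength (T : Set (π ⧸ N)) (p s) with hM2
    set M1 := T.sup fun t => wordLength (S : Set π) (σ t) with hM1
    apply GRaux.grseq_le_grseq (GRaux.Lk_submult S φ hS) (M2 * M1)
    intro k _
    apply Finset.sup_le
    intro t ht
    calc wordLength (T : Set (π ⧸ N)) ((⇑φQ)^[k] t)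
        = wordLength (T : Set (π ⧸ N)) (p (φ^[k] (σ t))) := by rw [← qiter, hσeq]
      _ ≤ M2 * wordLength (S : Set π) (φ^[k] (σ t)) := hM2bd _
      _ ≤ M2 * (Lk S (⇑φ) k * wordLength (S : Set π) (σ t)) :=
          Nat.mul_le_mul_left _ (GRaux.wl_iterate_le S φ hS k _)
      _ ≤ M2 * (Lk S (⇑φ) k * M1) := by
          have : wordLength (S : Set π) (σ t) ≤ M1 :=
            Finset.le_sup (f := fun t => wordLength (S : Set π) (σ t)) ht
          exact Nat.mul_le_mul_left _ (Nat.mul_le_mul_left _ this)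
      _ = M2 * M1 * Lk S (⇑φ) k := by ring
  -- hard direction
  have hardle : GR S ⇑φ ≤ max (GR S' ⇑restr) (GR T ⇑φQ) := by
    rw [GRaux.GR_eq_grseq, GRaux.GR_eq_grseq, GRaux.GR_eq_grseq]
    set GN := GRaux.grseq (Lk S' ⇑restr) with hGN
    set GQ := GRaux.grseq (Lk T ⇑φQ) with hGQ
    rcases lt_or_ge (max GN GQ) 1 with hlt | hge
    · -- degenerate case
      obtain ⟨j1, hj1, hz1⟩ := GRaux.grseq_lt_one (lt_of_le_of_lt (le_max_left GN GQ) hlt)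
      obtain ⟨j2, hj2, hz2⟩ := GRaux.grseq_lt_one (lt_of_le_of_lt (le_max_right GN GQ) hlt)
      have h1 : ∀ γ : N, (⇑restr)^[j1] γ = 1 := GRaux.Lk_eq_zero_iff S' restr hS' hz1
      have h2 : ∀ q : π ⧸ N, (⇑φQ)^[j2] q = 1 := GRaux.Lk_eq_zero_iff T φQ hT hz2
      have hzero : Lk S (⇑φ) (j2 + j1) = 0 := by
        apply Nat.le_zero.mp
        apply Finset.sup_le
        intro s hs
        have hmem : φ^[j2] s ∈ N := by
          have : p (φ^[j2] s) = 1 := by rw [← qiter]; exact h2 _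
          rwa [hp, QuotientGroup.mk'_apply, QuotientGroup.eq_one_iff] at this
        have : φ^[j2 + j1] s = 1 := by
          rw [Nat.add_comm, Function.iterate_add_apply]
          have := congrArg (Subtype.val) (h1 ⟨φ^[j2] s, hmem⟩)
          rw [hcoe_iter] at this
          exact this
        rw [this, GRaux.wl_one]
      rw [GRaux.grseq_eq_zero (by omega) hzero]
      exact le_trans (GRaux.grseq_nonneg _) (le_max_left GN GQ)
    · -- main case
      apply le_of_forall_gt_imp_ge_of_dense
      intro lam hlam
      have hlam1 : 1 < lam := lt_of_le_of_lt hge hlam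
      set lam0 : ℝ := (max GN GQ + lam) / 2 with hlam0
      have hlam00 : max GN GQ < lam0 := by rw [hlam0]; linarith
      have hlam01 : lam0 < lam := by rw [hlam0]; linarith
      have hlam0ge : 1 ≤ lam0 := by linarith
      have hlam0pos : (0:ℝ) < lam0 := by linarith
      obtain ⟨CN, hCN1, hCN⟩ := GRaux.grseq_geom (GRaux.Lk_submult S' restr hS') hlam0ge
        (lt_of_le_of_lt (le_max_left GN GQ) hlam00)
      obtain ⟨CQ, hCQ1, hCQ⟩ := GRaux.grseq_geom (GRaux.Lk_submult T φQ hT) hlam0ge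
        (lt_of_le_of_lt (le_max_right GN GQ) hlam00)
      -- constants
      set E := S'.sup (fun x : N => wordLength (S : Set π) (x : π)) with hE
      set M2 := S.sup (fun s => wordLength (T : Set (π ⧸ N)) (p s)) with hM2d
      set D := T.sup (fun t => wordLength (S : Set π) (σ t)) with hD
      set B1 := Lk S (⇑φ) 1 with hB1
      -- lifting lemma
      have hlift : ∀ q : π ⧸ N, ∃ g : π, p g = q ∧
          wordLength (S : Set π) g ≤ D * wordLength (T : Set (π ⧸ N)) q := by
        intro q
        obtain ⟨w, hw, hprod, hlen⟩ := GRaux.exists_word hT q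
        rw [← hlen, ← hprod]
        clear hprod hlen
        induction w with
        | nil => exact ⟨1, by simp, by simp [GRaux.wl_one]⟩
        | cons x tl ih =>
          obtain ⟨g', hg'1, hg'2⟩ := ih (fun z hz => hw z (List.mem_cons_of_mem _ hz))
          have hxlift : ∃ gx : π, p gx = x ∧ wordLength (S : Set π) gx ≤ D := by
            rcases hw x (by simp) with h | h
            · refine ⟨σ x, hσeq x, ?_⟩
              exact Finset.le_sup (f := fun t => wordLength (S : Set π) (σ t)) h
            · refine ⟨(σ x⁻¹)⁻¹, by rw [map_inv, hσeq, inv_inv], ?_⟩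
              exact le_trans (GRaux.wl_inv_le hS _)
                (Finset.le_sup (f := fun t => wordLength (S : Set π) (σ t)) h)
          obtain ⟨gx, hgx1, hgx2⟩ := hxlift
          refine ⟨gx * g', by rw [map_mul, hgx1, hg'1, List.prod_cons], ?_⟩
          calc wordLength (S : Set π) (gx * g')
              ≤ wordLength (S : Set π) gx + wordLength (S : Set π) g' := GRaux.wl_mul_le hS _ _
            _ ≤ D + D * tl.length := Nat.add_le_add hgx2 hg'2
            _ = D * (x :: tl).length := by simp [List.length_cons, Nat.mul_succ, Nat.mul_add]; ring
      -- real constants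
      set D2 : ℝ := (D : ℝ) * M2 * CQ with hD2
      have hD2nn : 0 ≤ D2 := by positivity
      set D3 : ℝ := D2 * lam0 + (B1 : ℝ) * D2 with hD3
      have hD3nn : 0 ≤ D3 := by positivity
      set D5 : ℝ := (c : ℝ) * c * D3 with hD5
      have hD5nn : 0 ≤ D5 := by positivity
      set D4 : ℝ := (c : ℝ) * c * (D2 + 1) with hD4
      have hD4nn : 0 ≤ D4 := by positivity
      have hCNnn : (0:ℝ) ≤ CN := by linarith
      set K : ℝ := CN * D5 + CN * D4 with hK
      have hKnn : 0 ≤ K := add_nonneg (mul_nonneg hCNnn hD5nn) (mul_nonneg hCNnn hD4nn)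
      set Cfin : ℝ := D2 + (E : ℝ) * K + 1 with hCfin
      have hCfin1 : 1 ≤ Cfin := by
        have hEK : 0 ≤ (E : ℝ) * K := mul_nonneg (Nat.cast_nonneg _) hKnn
        linarith
      -- the main estimate
      have main : ∀ s ∈ S, ∀ k : ℕ,
          (wordLength (S : Set π) (φ^[k] s) : ℝ) ≤ Cfin * ((k:ℝ) + 1) * lam0 ^ k := by
        intro s hs
        set u : ℕ → π := fun k => (hlift ((⇑φQ)^[k] (p s))).choose with hu
        have hu1 : ∀ k, p (u k) = (⇑φQ)^[k] (p s) := fun k => (hlift _).choose_spec.1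
        have hu2 : ∀ k, wordLength (S : Set π) (u k) ≤
            D * wordLength (T : Set (π ⧸ N)) ((⇑φQ)^[k] (p s)) := fun k => (hlift _).choose_spec.2
        have hu2R : ∀ k, (wordLength (S : Set π) (u k) : ℝ) ≤ D2 * lam0 ^ k := by
          intro k
          have ha : wordLength (T : Set (π ⧸ N)) ((⇑φQ)^[k] (p s)) ≤
              Lk T (⇑φQ) k * wordLength (T : Set (π ⧸ N)) (p s) := GRaux.wl_iterate_le T φQ hT k _
          have hb : wordLength (T : Set (π ⧸ N)) (p s) ≤ M2 :=
            Finset.le_sup (f := fun s => wordLength (T : Set (π ⧸ N)) (p s)) hs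
          have hn : wordLength (S : Set π) (u k) ≤ D * (Lk T (⇑φQ) k * M2) := by
            calc wordLength (S : Set π) (u k) ≤ _ := hu2 k
              _ ≤ D * (Lk T (⇑φQ) k * M2) := by
                  exact Nat.mul_le_mul_left _ (le_trans ha (Nat.mul_le_mul_left _ hb))
          have hnR : (wordLength (S : Set π) (u k) : ℝ) ≤
              (D : ℝ) * ((Lk T (⇑φQ) k : ℝ) * M2) := by exact_mod_cast hn
          calc (wordLength (S : Set π) (u k) : ℝ)
              ≤ (D : ℝ) * ((Lk T (⇑φQ) k : ℝ) * M2) := hnR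
            _ = ((D : ℝ) * (M2 : ℝ)) * (Lk T (⇑φQ) k : ℝ) := by ring
            _ ≤ ((D : ℝ) * (M2 : ℝ)) * (CQ * lam0 ^ k) := by
                apply mul_le_mul_of_nonneg_left (hCQ k) (by positivity)
            _ = D2 * lam0 ^ k := by rw [hD2]; ring
        -- the N-valued sequences
        have hnmem : ∀ k, (u k)⁻¹ * φ^[k] s ∈ N := by
          intro k
          rw [← QuotientGroup.eq_one_iff, ← QuotientGroup.mk'_apply, ← hp]
          rw [map_mul, map_inv, hu1, qiter]
          simp
        have hmmem : ∀ k, (u (k+1))⁻¹ * φ (u k) ∈ N := by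
          intro k
          rw [← QuotientGroup.eq_one_iff, ← QuotientGroup.mk'_apply, ← hp]
          rw [map_mul, map_inv, hu1]
          have : p (φ (u k)) = (⇑φQ)^[k+1] (p s) := by
            have h1 : p (φ (u k)) = φQ (p (u k)) := (QuotientGroup.map_mk' N N φ _ _).symm
            rw [h1, hu1]
            exact (Function.iterate_succ_apply' (⇑φQ) k (p s)).symm
          rw [this]
          simp
        set nn : ℕ → N := fun k => ⟨(u k)⁻¹ * φ^[k] s, hnmem k⟩ with hnn
        set mm : ℕ → N := fun k => ⟨(u (k+1))⁻¹ * φ (u k), hmmem k⟩ with hmm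
        have hrec : ∀ k, nn (k+1) = mm k * restr (nn k) := by
          intro k
          apply Subtype.ext
          show (u (k+1))⁻¹ * φ^[k+1] s = ((u (k+1))⁻¹ * φ (u k)) * φ ((u k)⁻¹ * φ^[k] s)
          rw [map_mul, map_inv, Function.iterate_succ_apply']
          group
        -- bounds on mm and nn 0
        have hmmR : ∀ k, (wordLength (S' : Set N) (mm k) : ℝ) ≤ D5 * lam0 ^ k := by
          intro k
          have h1 : wordLength (S : Set π) ((u (k+1))⁻¹ * φ (u k)) ≤
              wordLength (S : Set π) (u (k+1)) + B1 * wordLength (S : Set π) (u k) := by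
            refine le_trans (GRaux.wl_mul_le hS _ _) ?_
            apply Nat.add_le_add (GRaux.wl_inv_le hS _)
            have := GRaux.wl_iterate_le S φ hS 1 (u k)
            simpa using this
          have h2 : (wordLength (S' : Set N) (mm k) : ℝ) ≤
              (c : ℝ) * c * (wordLength (S : Set π) ((u (k+1))⁻¹ * φ (u k)) : ℝ) := by
            have := hc (mm k)
            have hcast : (wordLength (S' : Set N) (mm k) : ℝ) ≤
                (c:ℝ) * ((c:ℝ) * (wordLength (S : Set π) ((mm k : N) : π) : ℝ)) := by
              exact_mod_cast this
            calc (wordLength (S' : Set N) (mm k) : ℝ) ≤ _ := hcast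
              _ = (c : ℝ) * c * (wordLength (S : Set π) ((u (k+1))⁻¹ * φ (u k)) : ℝ) := by
                  rw [hmm]; ring_nf
          have h1R : (wordLength (S : Set π) ((u (k+1))⁻¹ * φ (u k)) : ℝ) ≤
              D2 * lam0 ^ (k+1) + (B1 : ℝ) * (D2 * lam0 ^ k) := by
            have hcast : (wordLength (S : Set π) ((u (k+1))⁻¹ * φ (u k)) : ℝ) ≤
                (wordLength (S : Set π) (u (k+1)) : ℝ) + (B1 : ℝ) * (wordLength (S : Set π) (u k) : ℝ) := by
              exact_mod_cast h1
            have e1 := hu2R (k+1)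
            have e2 := mul_le_mul_of_nonneg_left (hu2R k) (Nat.cast_nonneg (α := ℝ) B1)
            linarith
          have hpowk : lam0 ^ (k+1) = lam0 * lam0 ^ k := pow_succ' lam0 k
          have hpnn : (0:ℝ) ≤ lam0 ^ k := by positivity
          calc (wordLength (S' : Set N) (mm k) : ℝ) ≤ _ := h2
            _ ≤ (c:ℝ) * c * (D2 * lam0 ^ (k+1) + (B1:ℝ) * (D2 * lam0 ^ k)) := by
                apply mul_le_mul_of_nonneg_left h1R (by positivity)
            _ = D5 * lam0 ^ k := by rw [hD5, hD3, hpowk]; ring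
        have hn0R : (wordLength (S' : Set N) (nn 0) : ℝ) ≤ D4 := by
          have h1 : wordLength (S : Set π) ((u 0)⁻¹ * φ^[0] s) ≤
              wordLength (S : Set π) (u 0) + 1 := by
            refine le_trans (GRaux.wl_mul_le hS _ _) ?_
            apply Nat.add_le_add (GRaux.wl_inv_le hS _)
            simp only [Function.iterate_zero, id_eq]
            exact GRaux.wl_le [s] (by simpa using Or.inl hs) (by simp)
          have h2 := hc (nn 0)
          have hcast : (wordLength (S' : Set N) (nn 0) : ℝ) ≤
              (c:ℝ) * ((c:ℝ) * (wordLength (S : Set π) ((nn 0 : N) : π) : ℝ)) := by exact_mod_cast h2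
          have h1R : (wordLength (S : Set π) ((nn 0 : N) : π) : ℝ) ≤ D2 + 1 := by
            have hu0 := hu2R 0
            simp only [pow_zero, mul_one] at hu0
            have : (wordLength (S : Set π) ((u 0)⁻¹ * φ^[0] s) : ℝ) ≤
                (wordLength (S : Set π) (u 0) : ℝ) + 1 := by exact_mod_cast h1
            calc (wordLength (S : Set π) ((nn 0 : N) : π) : ℝ)
                = (wordLength (S : Set π) ((u 0)⁻¹ * φ^[0] s) : ℝ) := by rw [hnn]
              _ ≤ (wordLength (S : Set π) (u 0) : ℝ) + 1 := this
              _ ≤ D2 + 1 := by linarith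
          have h0c : (0:ℝ) ≤ (c:ℝ) := Nat.cast_nonneg _
          calc (wordLength (S' : Set N) (nn 0) : ℝ)
              ≤ (c:ℝ) * ((c:ℝ) * (wordLength (S : Set π) ((nn 0 : N) : π) : ℝ)) := hcast
            _ ≤ (c:ℝ) * ((c:ℝ) * (D2 + 1)) :=
                mul_le_mul_of_nonneg_left (mul_le_mul_of_nonneg_left h1R h0c) h0c
            _ = D4 := by rw [hD4]; ring
        -- product formula
        have prodform := GRaux.prod_formula restr mm nn hrec
        -- bound on nn k
        have hnnR : ∀ k, (wordLength (S' : Set N) (nn k) : ℝ) ≤ K * ((k:ℝ) + 1) * lam0 ^ k := by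
          intro k
          have h1 : wordLength (S' : Set N) (nn k) ≤
              ((((List.range k).reverse.map (fun j => wordLength (S' : Set N) ((⇑restr)^[k-1-j] (mm j))))).sum)
              + wordLength (S' : Set N) ((⇑restr)^[k] (nn 0)) := by
            rw [prodform k]
            refine le_trans (GRaux.wl_mul_le hS' _ _) ?_
            apply Nat.add_le_add_right
            have := GRaux.wl_list_prod_le hS'
              ((List.range k).reverse.map (fun j => (⇑restr)^[k-1-j] (mm j)))
            rw [List.map_map] at this
            exact this
          have h2 : (((((List.range k).reverse.map (fun j => wordLength (S' : Set N) ((⇑restr)^[k-1-j] (mm j))))).sum : ℕ) : ℝ)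
              ≤ (k : ℝ) * (CN * D5 * lam0 ^ k) := by
            have := GRaux.list_sum_le
              ((List.range k).reverse.map (fun j => wordLength (S' : Set N) ((⇑restr)^[k-1-j] (mm j))))
              (X := CN * D5 * lam0 ^ k) ?_
            · simpa using this
            · intro x hx
              obtain ⟨j, hj, rfl⟩ := List.mem_map.mp hx
              have hjk : j < k := List.mem_range.mp (List.mem_reverse.mp hj)
              have ha : wordLength (S' : Set N) ((⇑restr)^[k-1-j] (mm j)) ≤
                  Lk S' (⇑restr) (k-1-j) * wordLength (S' : Set N) (mm j) :=
                GRaux.wl_iterate_le S' restr hS' (k-1-j) _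
              have haR : ((wordLength (S' : Set N) ((⇑restr)^[k-1-j] (mm j))) : ℝ) ≤
                  (Lk S' (⇑restr) (k-1-j) : ℝ) * (wordLength (S' : Set N) (mm j) : ℝ) := by
                exact_mod_cast ha
              have hb := hCN (k-1-j)
              have hcb := hmmR j
              have hcomb : ((wordLength (S' : Set N) ((⇑restr)^[k-1-j] (mm j))) : ℝ) ≤
                  (CN * lam0 ^ (k-1-j)) * (D5 * lam0 ^ j) := by
                have h0b : (0:ℝ) ≤ (wordLength (S' : Set N) (mm j) : ℝ) := Nat.cast_nonneg _
                have h0c : (0:ℝ) ≤ CN * lam0 ^ (k-1-j) := by positivity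
                exact le_trans haR (mul_le_mul hb hcb h0b h0c)
              have hexp : lam0 ^ (k-1-j) * lam0 ^ j = lam0 ^ (k-1) := by
                rw [← pow_add]
                congr 1
                omega
              have hple : lam0 ^ (k-1) ≤ lam0 ^ k := pow_le_pow_right₀ hlam0ge (by omega)
              calc ((wordLength (S' : Set N) ((⇑restr)^[k-1-j] (mm j))) : ℝ)
                  ≤ (CN * lam0 ^ (k-1-j)) * (D5 * lam0 ^ j) := hcomb
                _ = CN * D5 * lam0 ^ (k-1) := by rw [← hexp]; ring
                _ ≤ CN * D5 * lam0 ^ k :=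
                    mul_le_mul_of_nonneg_left hple (mul_nonneg hCNnn hD5nn)
          have h3 : (wordLength (S' : Set N) ((⇑restr)^[k] (nn 0)) : ℝ) ≤ CN * lam0 ^ k * D4 := by
            have ha := GRaux.wl_iterate_le S' restr hS' k (nn 0)
            have haR : ((wordLength (S' : Set N) ((⇑restr)^[k] (nn 0))) : ℝ) ≤
                (Lk S' (⇑restr) k : ℝ) * (wordLength (S' : Set N) (nn 0) : ℝ) := by exact_mod_cast ha
            have hb := hCN k
            have h0b : (0:ℝ) ≤ (wordLength (S' : Set N) (nn 0) : ℝ) := Nat.cast_nonneg _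
            have h0c : (0:ℝ) ≤ CN * lam0 ^ k := by positivity
            exact le_trans haR (mul_le_mul hb hn0R h0b h0c)
          have h1R : (wordLength (S' : Set N) (nn k) : ℝ) ≤
              (((((List.range k).reverse.map (fun j => wordLength (S' : Set N) ((⇑restr)^[k-1-j] (mm j))))).sum : ℕ) : ℝ)
              + (wordLength (S' : Set N) ((⇑restr)^[k] (nn 0)) : ℝ) := by exact_mod_cast h1
          have hknn : (0:ℝ) ≤ (k:ℝ) := Nat.cast_nonneg _
          have hpnn : (0:ℝ) ≤ lam0 ^ k := by positivity
          have X1 : (0:ℝ) ≤ CN * D5 * lam0 ^ k := by positivity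
          have X2 : (0:ℝ) ≤ CN * D4 * lam0 ^ k := by positivity
          have e1 : (k:ℝ) * (CN * D5 * lam0 ^ k) ≤ ((k:ℝ)+1) * (CN * D5 * lam0 ^ k) :=
            mul_le_mul_of_nonneg_right (by linarith) X1
          have e2 : CN * lam0 ^ k * D4 ≤ ((k:ℝ)+1) * (CN * D4 * lam0 ^ k) := by
            have : CN * lam0 ^ k * D4 = 1 * (CN * D4 * lam0 ^ k) := by ring
            rw [this]
            exact mul_le_mul_of_nonneg_right (by linarith) X2
          have etarget : K * ((k:ℝ)+1) * lam0 ^ k =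
              ((k:ℝ)+1) * (CN * D5 * lam0 ^ k) + ((k:ℝ)+1) * (CN * D4 * lam0 ^ k) := by
            rw [hK]; ring
          rw [etarget]
          linarith
        -- final assembly
        intro k
        have hdecomp : φ^[k] s = u k * ((u k)⁻¹ * φ^[k] s) := by group
        have h1 : wordLength (S : Set π) (φ^[k] s) ≤
            wordLength (S : Set π) (u k) + wordLength (S : Set π) ((nn k : N) : π) := by
          rw [hdecomp]
          exact GRaux.wl_mul_le hS _ _
        have h2 : wordLength (S : Set π) ((nn k : N) : π) ≤ E * wordLength (S' : Set N) (nn k) :=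
          hEbd (nn k)
        have h1R : (wordLength (S : Set π) (φ^[k] s) : ℝ) ≤
            (wordLength (S : Set π) (u k) : ℝ) + (E : ℝ) * (wordLength (S' : Set N) (nn k) : ℝ) := by
          have := le_trans h1 (Nat.add_le_add_left h2 _)
          exact_mod_cast this
        have h3 := hu2R k
        have h4 := hnnR k
        have hEnn : (0:ℝ) ≤ (E:ℝ) := Nat.cast_nonneg _
        have hpnn : (0:ℝ) ≤ lam0 ^ k := by positivity
        have hknn : (0:ℝ) ≤ (k:ℝ) := Nat.cast_nonneg _
        have e1 : D2 * lam0 ^ k ≤ D2 * (((k:ℝ)+1) * lam0 ^ k) := by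
          have : D2 * lam0 ^ k = D2 * (1 * lam0 ^ k) := by ring
          rw [this]
          exact mul_le_mul_of_nonneg_left
            (mul_le_mul_of_nonneg_right (by linarith) hpnn) hD2nn
        have e2 : (E:ℝ) * (wordLength (S' : Set N) (nn k) : ℝ) ≤
            (E:ℝ) * (K * ((k:ℝ)+1) * lam0 ^ k) := mul_le_mul_of_nonneg_left h4 hEnn
        have e3 : (0:ℝ) ≤ 1 * (((k:ℝ)+1) * lam0 ^ k) := by positivity
        have etarget : Cfin * ((k:ℝ)+1) * lam0 ^ k =
            D2 * (((k:ℝ)+1) * lam0 ^ k) + (E:ℝ) * (K * ((k:ℝ)+1) * lam0 ^ k)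
            + 1 * (((k:ℝ)+1) * lam0 ^ k) := by rw [hCfin]; ring
        rw [etarget]
        linarith
      -- conclude
      have hB : ∀ k : ℕ, (Lk S (⇑φ) k : ℝ) ≤ Cfin * ((k:ℝ) + 1) * lam0 ^ k := by
        intro k
        apply GRaux.sup_cast_le
        · positivity
        · intro s hs; exact main s hs k
      have hd : 1 < lam / lam0 := (one_lt_div hlam0pos).mpr hlam01
      obtain ⟨C2, hC21, hC2⟩ := GRaux.bernoulli_bound hd
      have hCC2 : (1:ℝ) ≤ Cfin * C2 := by
        calc (1:ℝ) = 1 * 1 := by ring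
          _ ≤ Cfin * C2 := mul_le_mul hCfin1 hC21 (by norm_num) (by linarith)
      apply GRaux.grseq_le_of_geom (C := Cfin * C2) hCC2 (by linarith)
      intro k hk
      have h1 := hB k
      have h2 := hC2 k
      have h3 : (lam / lam0) ^ k * lam0 ^ k = lam ^ k := by
        rw [← mul_pow, div_mul_cancel₀ _ (ne_of_gt hlam0pos)]
      have hpnn : (0:ℝ) ≤ lam0 ^ k := by positivity
      have hdnn : (0:ℝ) ≤ (lam / lam0) ^ k := by positivity
      calc (Lk S (⇑φ) k : ℝ) ≤ Cfin * ((k:ℝ) + 1) * lam0 ^ k := h1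
        _ ≤ Cfin * (C2 * (lam / lam0) ^ k) * lam0 ^ k := by
            exact mul_le_mul_of_nonneg_right
              (mul_le_mul_of_nonneg_left h2 (by linarith : (0:ℝ) ≤ Cfin)) hpnn
        _ = Cfin * C2 * lam ^ k := by rw [← h3]; ring
  rw [hre]
  exact le_antisymm hardle (max_le part1 partQ)
end
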